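/- Every lace diagram for (e_0,...,e_n) with rank conditions r has length at least d(r) = sum over 0 <= i < j <= n of (r_{i,j-1} - r_{ij})(r_{i+1,j} - r_{ij}); in other words, the smallest possible length of a lace diagram with rank conditions r is d(r). -/

import Mathlib

open MvPolynomial

/-! Common setup.  Dots in columns, positions in permutations, and variable
indices are all 0-indexed: dot `q` (0-indexed) of column `i` is dot `q+1`
(1-indexed) in the paper, the variable `(i, j) : ℕ × ℕ` is the Chern root
`x^i_{j+1}`, and in the Schubert variable type `ℕ ⊕ ℕ`, `Sum.inl a` is
`x_{a+1}` and `Sum.inr b` is `y_{b+1}`. -/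

/-- Coxeter length = number of inversions of a (finitely supported) permutation of ℕ. -/
noncomputable def ell (w : Equiv.Perm ℕ) : ℕ :=
  {p : ℕ × ℕ | p.1 < p.2 ∧ w p.2 < w p.1}.ncard

/-- A finitely supported permutation of ℕ. -/
def FinSupp (w : Equiv.Perm ℕ) : Prop := {x | w x ≠ x}.Finite

/-- A lace diagram for the dimension vector `e 0, …, e n`, encoded as a sequence
`w 1, …, w n` of finitely supported permutations of ℕ (normalized so that
`w i = 1` outside `1 ≤ i ≤ n`): all descent positions of `w i` are `< e i` and
all descent positions of `(w i)⁻¹` are `< e (i-1)` (0-indexed positions). -/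
def IsLace (n : ℕ) (e : ℕ → ℕ) (w : ℕ → Equiv.Perm ℕ) : Prop :=
  (∀ i, i = 0 ∨ n < i → w i = 1) ∧
  ∀ i, 1 ≤ i → i ≤ n → FinSupp (w i) ∧
    (∀ k, w i (k + 1) < w i k → k < e i) ∧
    (∀ k, (w i)⁻¹ (k + 1) < (w i)⁻¹ k → k < e (i - 1))

/-- `chain w i k p = (w k)⁻¹ (⋯ ((w (i+1))⁻¹ p))` for `k ≥ i`, and `p` for `k ≤ i`. -/
def chain (w : ℕ → Equiv.Perm ℕ) (i : ℕ) : ℕ → ℕ → ℕ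
  | 0, p => p
  | k + 1, p => if k + 1 ≤ i then p else (w (k + 1))⁻¹ (chain w i k p)

/-- The rank conditions of a lace diagram: `rank e w i j` is the number of dots
`p < e i` of column `i` whose strand continues through column `j`. -/
noncomputable def rank (e : ℕ → ℕ) (w : ℕ → Equiv.Perm ℕ) (i j : ℕ) : ℕ :=
  {p : ℕ | p < e i ∧ ∀ k, i < k → k ≤ j → chain w i k p < e k}.ncard

/-- The lace diagram `w` has rank conditions `r` (for `0 ≤ i ≤ j ≤ n`). -/
def RankEq (n : ℕ) (e : ℕ → ℕ) (w : ℕ → Equiv.Perm ℕ) (r : ℕ → ℕ → ℕ) : Prop :=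
  ∀ i j, i ≤ j → j ≤ n → rank e w i j = r i j

/-- The length of a lace diagram. -/
noncomputable def diagLength (n : ℕ) (w : ℕ → Equiv.Perm ℕ) : ℕ :=
  ∑ i ∈ Finset.Icc 1 n, ell (w i)

/-- The expected codimension `d(r)`. -/
def codim (n : ℕ) (r : ℕ → ℕ → ℕ) : ℕ :=
  ∑ i ∈ Finset.range (n + 1), ∑ j ∈ Finset.range (n + 1),
    if i < j then (r i (j - 1) - r i j) * (r (i + 1) j - r i j) else 0

/-- A minimal lace diagram: its length equals the expected codimension of its
rank conditions. -/
def IsMinimal (n : ℕ) (e : ℕ → ℕ) (w : ℕ → Equiv.Perm ℕ) : Prop :=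
  IsLace n e w ∧ diagLength n w = codim n (rank e w)

/-- The longest element of `S m` (0-indexed), as a permutation of ℕ. -/
def longest (m : ℕ) : Equiv.Perm ℕ where
  toFun i := if i < m then m - 1 - i else i
  invFun i := if i < m then m - 1 - i else i
  left_inv i := by dsimp only; split_ifs <;> omega
  right_inv i := by dsimp only; split_ifs <;> omega

/-- Interchanging the x-variables `x (i+1)` and `x (i+2)` (0-indexed: `inl i`
and `inl (i+1)`). -/
noncomputable def sX (i : ℕ) (f : MvPolynomial (ℕ ⊕ ℕ) ℤ) : MvPolynomial (ℕ ⊕ ℕ) ℤ :=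
  rename (Sum.map (Equiv.swap i (i + 1)) id) f

/-- `S` is the family of double Schubert polynomials `S w = 𝔖_w(x; y)`:
it takes the prescribed product value on each longest element, it satisfies the
divided difference recursion `(x i - x (i+1)) * S (w * s i) = S w - (S w)^{s i}`
when `w` has a descent at `i` and `(S w)^{s i} = S w` otherwise, and only the
variables up to the last descents of `w` and `w⁻¹` occur in `S w`. -/
def IsSchubertFamily (S : Equiv.Perm ℕ → MvPolynomial (ℕ ⊕ ℕ) ℤ) : Prop :=
  (∀ m : ℕ, S (longest m) =
      ∏ i ∈ Finset.range m, ∏ j ∈ Finset.range m,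
        if i + j + 2 ≤ m then X (Sum.inl i) - X (Sum.inr j) else 1) ∧
  (∀ w : Equiv.Perm ℕ, FinSupp w → ∀ i : ℕ,
    (w (i + 1) < w i →
      (X (Sum.inl i) - X (Sum.inl (i + 1))) * S (w * Equiv.swap i (i + 1)) =
        S w - sX i (S w)) ∧
    (w i < w (i + 1) → sX i (S w) = S w)) ∧
  (∀ w : Equiv.Perm ℕ, FinSupp w → ∀ k l : ℕ,
    (∀ t, k ≤ t → ¬w (t + 1) < w t) → (∀ t, l ≤ t → ¬w⁻¹ (t + 1) < w⁻¹ t) →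
    ∀ v ∈ (S w).vars, (∃ a < k, v = Sum.inl a) ∨ (∃ b < l, v = Sum.inr b))

/-- The product `S(w) = 𝔖_{w 1}(x^1;x^0) ⋯ 𝔖_{w n}(x^n;x^{n-1})`, in the
variables `(i, j) = x^i_{j+1}`. -/
noncomputable def Sprod (n : ℕ) (S : Equiv.Perm ℕ → MvPolynomial (ℕ ⊕ ℕ) ℤ)
    (w : ℕ → Equiv.Perm ℕ) : MvPolynomial (ℕ × ℕ) ℤ :=
  ∏ i ∈ Finset.Icc 1 n,
    rename (Sum.elim (fun a => (i, a)) (fun b => (i - 1, b))) (S (w i))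

/-- The component-formula polynomial `Q_r`: the sum of `Sprod n S w` over all
minimal lace diagrams `w` with rank conditions `r`. -/
noncomputable def Qpoly (n : ℕ) (e : ℕ → ℕ) (r : ℕ → ℕ → ℕ)
    (S : Equiv.Perm ℕ → MvPolynomial (ℕ ⊕ ℕ) ℤ) : MvPolynomial (ℕ × ℕ) ℤ :=
  ∑ᶠ (w : ℕ → Equiv.Perm ℕ) (_ : IsMinimal n e w ∧ RankEq n e w r), Sprod n S w

/-- The shifted permutation `1^k × w`: fixes `0, …, k-1` (0-indexed) and sends
`k + j` to `k + w j`. -/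
def shiftPerm (k : ℕ) (w : Equiv.Perm ℕ) : Equiv.Perm ℕ where
  toFun j := if j < k then j else w (j - k) + k
  invFun j := if j < k then j else w⁻¹ (j - k) + k
  left_inv j := by
    dsimp only
    by_cases h : j < k
    · simp [h]
    · have h1 : ¬ w (j - k) + k < k := by omega
      simp only [if_neg h, if_neg h1, Nat.add_sub_cancel, Equiv.Perm.coe_inv, Equiv.symm_apply_apply]
      omega
  right_inv j := by
    dsimp only
    by_cases h : j < k
    · simp [h]
    · have h1 : ¬ w⁻¹ (j - k) + k < k := by omega
      simp only [if_neg h, if_neg h1, Nat.add_sub_cancel]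
      have h2 : w (w⁻¹ (j - k)) = j - k := Equiv.apply_symm_apply w (j - k)
      omega

/-- The lace diagram `(1^k × w 1, …, 1^k × w n)`. -/
def shiftDiag (k : ℕ) (w : ℕ → Equiv.Perm ℕ) : ℕ → Equiv.Perm ℕ :=
  fun i => shiftPerm k (w i)

/-- The transformation of lace diagrams, allowed at `(i, j)` (0-indexed `j`,
so `j + 1 < e i`) when exactly one of the two descent conditions holds; it
replaces `w i` by `w i * s j` and `w (i+1)` by `s j * w (i+1)`. -/
def TransStep (n : ℕ) (e : ℕ → ℕ) (w w' : ℕ → Equiv.Perm ℕ) : Prop :=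
  IsLace n e w ∧ ∃ i j, 1 ≤ i ∧ i + 1 ≤ n ∧ j + 1 < e i ∧
    Xor' (w i (j + 1) < w i j) ((w (i + 1))⁻¹ (j + 1) < (w (i + 1))⁻¹ j) ∧
    w' = Function.update (Function.update w i (w i * Equiv.swap j (j + 1))) (i + 1)
          (Equiv.swap j (j + 1) * w (i + 1))

/-- The column where the strand through dot `q` of column `c` starts. -/
def startCol (e : ℕ → ℕ) (w : ℕ → Equiv.Perm ℕ) : ℕ → ℕ → ℕ
  | 0, _ => 0
  | c + 1, q => if w (c + 1) q < e c then startCol e w c (w (c + 1) q) else c + 1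

/-- The starting dot `(column, position)` of the strand through dot `q` of column `c`. -/
def startDot (e : ℕ → ℕ) (w : ℕ → Equiv.Perm ℕ) : ℕ → ℕ → ℕ × ℕ
  | 0, q => (0, q)
  | c + 1, q => if w (c + 1) q < e c then startDot e w c (w (c + 1) q) else (c + 1, q)

def endColAux (e : ℕ → ℕ) (w : ℕ → Equiv.Perm ℕ) : ℕ → ℕ → ℕ → ℕ
  | 0, c, _ => c
  | f + 1, c, q =>
      if (w (c + 1))⁻¹ q < e (c + 1) then endColAux e w f (c + 1) ((w (c + 1))⁻¹ q) else c

/-- The column where the strand through dot `q` of column `c` terminates. -/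
def endCol (n : ℕ) (e : ℕ → ℕ) (w : ℕ → Equiv.Perm ℕ) (c q : ℕ) : ℕ :=
  endColAux e w (n - c) c q

/-- `w` is the left-most lace diagram (for its rank conditions): it is a lace
diagram such that in every column the strands are sorted from top to bottom by
starting column (ascending) and then by terminating column (descending), exactly
as produced by the construction which adds, for `i = 0, …, n` and `j = n, …, i`,
all strands from column `i` to column `j` to the bottom of the diagram; and
strands with the same start and end do not cross. -/
def IsLeftmost (n : ℕ) (e : ℕ → ℕ) (w : ℕ → Equiv.Perm ℕ) : Prop :=
  IsLace n e w ∧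
  (∀ c, c ≤ n → ∀ q q', q < q' → q' < e c →
    startCol e w c q < startCol e w c q' ∨
      (startCol e w c q = startCol e w c q' ∧ endCol n e w c q' ≤ endCol n e w c q)) ∧
  (∀ c, 1 ≤ c → c ≤ n → ∀ q q', q < q' → q' < e c →
    startCol e w c q = startCol e w c q' → endCol n e w c q = endCol n e w c q' →
    w c q < w c q')

/-- The substitution homomorphism `φ_u` of a lace diagram `u`: it sends the
variable `x^i_j` to the variable `b_S` of the strand `S` of `u` through dot
`(i, j)`, where the strand variables are realized as the variables indexed by
the starting dots of strands. -/
noncomputable def phiMap (e : ℕ → ℕ) (u : ℕ → Equiv.Perm ℕ) :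
    MvPolynomial (ℕ × ℕ) ℤ →ₐ[ℤ] MvPolynomial (ℕ × ℕ) ℤ :=
  rename fun p => startDot e u p.1 p.2

/-- The product of the simple transpositions `s (i+1)` (1-indexed) for `i` in `l`. -/
def wordProd (l : List ℕ) : Equiv.Perm ℕ := (l.map fun i => Equiv.swap i (i + 1)).prod

/-- A reduced word for a finitely supported permutation of ℕ. -/
def IsReducedWord (u : Equiv.Perm ℕ) (l : List ℕ) : Prop :=
  wordProd l = u ∧ l.length = ell u

/-- Bruhat order: some reduced word for `u` contains a subword which is a
reduced word for `w`. -/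
def BruhatLE (w u : Equiv.Perm ℕ) : Prop :=
  ∃ l l', IsReducedWord u l ∧ IsReducedWord w l' ∧ l'.Sublist l


theorem Equiv.Perm.inv_apply_self (f : Equiv.Perm ℕ) (x : ℕ) : f⁻¹ (f x) = x :=
  Equiv.symm_apply_apply f x

theorem Equiv.Perm.apply_inv_self (f : Equiv.Perm ℕ) (x : ℕ) : f (f⁻¹ x) = x :=
  Equiv.apply_symm_apply f x

/-! ### Auxiliary lemmas -/

open Finset

section ChainLemmas

variable {w : ℕ → Equiv.Perm ℕ}

lemma chain_of_le (w : ℕ → Equiv.Perm ℕ) {i k : ℕ} (h : k ≤ i) (p : ℕ) :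
    chain w i k p = p := by
  induction k with
  | zero => rfl
  | succ m ih => rw [chain, if_pos h]

lemma chain_self (w : ℕ → Equiv.Perm ℕ) (i p : ℕ) : chain w i i p = p :=
  chain_of_le w le_rfl p

lemma chain_succ_of_lt (w : ℕ → Equiv.Perm ℕ) {i k : ℕ} (h : i < k + 1) (p : ℕ) :
    chain w i (k + 1) p = (w (k + 1))⁻¹ (chain w i k p) := by
  rw [chain, if_neg (by omega)]

/-- going one step back up the chain -/
lemma chain_down (w : ℕ → Equiv.Perm ℕ) {i m : ℕ} (h : i ≤ m) (p : ℕ) :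
    w (m + 1) (chain w i (m + 1) p) = chain w i m p := by
  rw [chain_succ_of_lt w (by omega), Equiv.Perm.apply_inv_self]

lemma chain_shift (w : ℕ → Equiv.Perm ℕ) {i k : ℕ} (h : i + 1 ≤ k) (q : ℕ) :
    chain w i k (w (i + 1) q) = chain w (i + 1) k q := by
  induction k with
  | zero => omega
  | succ m ih =>
    rcases Nat.lt_or_ge i m with hm | hm
    · rw [chain_succ_of_lt w (by omega), chain_succ_of_lt w (by omega), ih (by omega)]
    · have : m = i := by omega
      subst this
      rw [chain_succ_of_lt w (by omega), chain_self, chain_of_le w le_rfl,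
        Equiv.Perm.inv_apply_self]

/-- chains agree below a common point if they agree at it -/
lemma chain_eq_down {i i' : ℕ} (p p' : ℕ) {k m : ℕ} (him : i ≤ m) (hi'm : i' ≤ m)
    (hmk : m ≤ k) (h : chain w i k p = chain w i' k p') :
    chain w i m p = chain w i' m p' := by
  obtain ⟨d, rfl⟩ : ∃ d, k = m + d := ⟨k - m, by omega⟩
  clear hmk
  induction d with
  | zero => exact h
  | succ t ih =>
    apply ih
    have h' : chain w i (m + t + 1) p = chain w i' (m + t + 1) p' := h
    rw [← chain_down w (show i ≤ m + t by omega) p,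
      ← chain_down w (show i' ≤ m + t by omega) p', h']

lemma chain_eq_up {i i' : ℕ} (p p' : ℕ) {k m : ℕ} (hik : i ≤ k) (hi'k : i' ≤ k)
    (hkm : k ≤ m) (h : chain w i k p = chain w i' k p') :
    chain w i m p = chain w i' m p' := by
  obtain ⟨d, rfl⟩ : ∃ d, m = k + d := ⟨m - k, by omega⟩
  induction d with
  | zero => exact h
  | succ t ih =>
    rw [show k + (t+1) = k + t + 1 from rfl, chain_succ_of_lt w (by omega),
      chain_succ_of_lt w (by omega), ih (by omega)]

end ChainLemmas

section Inversions

/-- The finite set of inversions of a permutation supported below `N`. -/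
noncomputable def invF (w : Equiv.Perm ℕ) (N : ℕ) : Finset (ℕ × ℕ) :=
  (Finset.range N ×ˢ Finset.range N).filter fun p => p.1 < p.2 ∧ w p.2 < w p.1

lemma mem_invF {w : Equiv.Perm ℕ} {N : ℕ} (hN : ∀ x, N ≤ x → w x = x)
    {x y : ℕ} (hxy : x < y) (hw : w y < w x) : (x, y) ∈ invF w N := by
  have hyN : y < N := by
    by_contra hy
    push_neg at hy
    have h1 : w y = y := hN y hy
    have h2 : N ≤ w x := by omega
    have h3 : w (w x) = w x := hN _ h2
    have h4 : w x = x := by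
      have := w.injective h3
      omega
    omega
  have hxN : x < N := by omega
  simp [invF, hxN, hyN, hxy, hw]

lemma invSet_eq_invF {w : Equiv.Perm ℕ} {N : ℕ} (hN : ∀ x, N ≤ x → w x = x) :
    {p : ℕ × ℕ | p.1 < p.2 ∧ w p.2 < w p.1} = ↑(invF w N) := by
  ext ⟨x, y⟩
  constructor
  · rintro ⟨h1, h2⟩
    exact mem_invF hN h1 h2
  · intro h
    simp only [invF, Finset.coe_filter, Set.mem_setOf_eq, Finset.mem_product] at h
    exact h.2

lemma ell_eq_card_invF {w : Equiv.Perm ℕ} {N : ℕ} (hN : ∀ x, N ≤ x → w x = x) :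
    ell w = (invF w N).card := by
  rw [ell, invSet_eq_invF hN, Set.ncard_coe_finset]

open scoped Classical in
/-- A bound beyond which a finitely supported permutation is the identity. -/
noncomputable def suppBound (w : Equiv.Perm ℕ) : ℕ :=
  if h : FinSupp w then h.toFinset.sup id + 1 else 0

lemma suppBound_spec {w : Equiv.Perm ℕ} (h : FinSupp w) :
    ∀ x, suppBound w ≤ x → w x = x := by
  intro x hx
  rw [suppBound] at hx
  rw [dif_pos h] at hx
  by_contra hwx
  have : x ∈ h.toFinset := (Set.Finite.mem_toFinset h).mpr hwx
  have := Finset.le_sup (f := id) this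
  simp at this
  omega

end Inversions

section RankFinset

open scoped Classical

/-- Finset of dots in column `i` surviving through column `j`. -/
noncomputable def SF (e : ℕ → ℕ) (w : ℕ → Equiv.Perm ℕ) (i j : ℕ) : Finset ℕ :=
  (Finset.range (e i)).filter fun p => ∀ k, i < k → k ≤ j → chain w i k p < e k

variable (e : ℕ → ℕ) (w : ℕ → Equiv.Perm ℕ)

lemma mem_SF {i j p : ℕ} :
    p ∈ SF e w i j ↔ p < e i ∧ ∀ k, i < k → k ≤ j → chain w i k p < e k := by
  simp [SF]

lemma rank_eq_card_SF (i j : ℕ) : rank e w i j = (SF e w i j).card := by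
  rw [rank]
  have h : {p : ℕ | p < e i ∧ ∀ k, i < k → k ≤ j → chain w i k p < e k} = ↑(SF e w i j) := by
    ext p; simp [SF]
  rw [h, Set.ncard_coe_finset]

lemma SF_anti {i j j' : ℕ} (h : j ≤ j') : SF e w i j' ⊆ SF e w i j := by
  intro p hp
  rw [mem_SF] at hp ⊢
  exact ⟨hp.1, fun k hk1 hk2 => hp.2 k hk1 (by omega)⟩

lemma SF_self (i : ℕ) : SF e w i i = Finset.range (e i) := by
  ext p
  simp only [mem_SF, Finset.mem_range]
  exact ⟨fun h => h.1, fun h => ⟨h, fun k hk1 hk2 => by omega⟩⟩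

lemma card_SF_step {i j : ℕ} (hij : i < j) :
    (SF e w i j).card = ((SF e w (i + 1) j).filter (fun q => w (i + 1) q < e i)).card := by
  apply Finset.card_bij' (fun p _ => (w (i + 1))⁻¹ p) (fun q _ => w (i + 1) q)
  · intro p hp
    rw [mem_SF] at hp
    simp only [Finset.mem_filter, mem_SF, Equiv.Perm.apply_inv_self]
    refine ⟨⟨?_, ?_⟩, hp.1⟩
    · have := hp.2 (i + 1) (by omega) (by omega)
      rwa [chain_succ_of_lt w (by omega), chain_self] at this
    · intro k hk1 hk2
      have := hp.2 k (by omega) hk2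
      rwa [show p = w (i+1) ((w (i+1))⁻¹ p) by rw [Equiv.Perm.apply_inv_self],
        chain_shift w (by omega)] at this
  · intro q hq
    simp only [Finset.mem_filter, mem_SF] at hq
    rw [mem_SF]
    refine ⟨hq.2, fun k hk1 hk2 => ?_⟩
    rcases Nat.lt_or_ge (i + 1) k with hk | hk
    · rw [chain_shift w (by omega)]
      exact hq.1.2 k hk hk2
    · have : k = i + 1 := by omega
      subst this
      rw [chain_succ_of_lt w (by omega), chain_self, Equiv.Perm.inv_apply_self]
      exact hq.1.1
  · intro p hp
    exact Equiv.Perm.apply_inv_self _ _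
  · intro q hq
    exact Equiv.Perm.inv_apply_self _ _

end RankFinset

section LowerBound

open scoped Classical

noncomputable def AFs (e : ℕ → ℕ) (w : ℕ → Equiv.Perm ℕ) (i j : ℕ) : Finset ℕ :=
  SF e w i (j - 1) \ SF e w i j

noncomputable def BFs (e : ℕ → ℕ) (w : ℕ → Equiv.Perm ℕ) (i j : ℕ) : Finset ℕ :=
  (SF e w (i + 1) j).filter fun q => e i ≤ w (i + 1) q

noncomputable def DD (n : ℕ) (e : ℕ → ℕ) (w : ℕ → Equiv.Perm ℕ) : Finset (ℕ × ℕ × ℕ × ℕ) :=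
  (Finset.range (n+1) ×ˢ Finset.range (n+1)).biUnion fun ij =>
    if ij.1 < ij.2 then
      (AFs e w ij.1 ij.2 ×ˢ BFs e w ij.1 ij.2).image fun pq => (ij.1, ij.2, pq.1, pq.2)
    else ∅

noncomputable def TT (n : ℕ) (w : ℕ → Equiv.Perm ℕ) : Finset (ℕ × ℕ × ℕ) :=
  (Finset.Icc 1 n).biUnion fun k =>
    (invF (w k) (suppBound (w k))).image fun pq => (k, pq.1, pq.2)

lemma mem_DD {n : ℕ} {e : ℕ → ℕ} {w : ℕ → Equiv.Perm ℕ} {i j p q : ℕ} :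
    (i, j, p, q) ∈ DD n e w ↔
      i < j ∧ j ≤ n ∧ p ∈ AFs e w i j ∧ q ∈ BFs e w i j := by
  constructor
  · intro h
    rw [DD, Finset.mem_biUnion] at h
    obtain ⟨ij, hij, hmem⟩ := h
    rw [Finset.mem_product, Finset.mem_range, Finset.mem_range] at hij
    split_ifs at hmem with hlt
    · rw [Finset.mem_image] at hmem
      obtain ⟨pq, hpq, heq⟩ := hmem
      rw [Finset.mem_product] at hpq
      have hcomp : i = ij.1 ∧ j = ij.2 ∧ p = pq.1 ∧ q = pq.2 := by
        simpa [Prod.ext_iff] using heq.symm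
      obtain ⟨h1, h2, h3, h4⟩ := hcomp
      subst h1; subst h2; subst h3; subst h4
      exact ⟨hlt, by omega, hpq.1, hpq.2⟩
    · exact absurd hmem (Finset.notMem_empty _)
  · rintro ⟨h1, h2, h3, h4⟩
    rw [DD, Finset.mem_biUnion]
    refine ⟨(i, j), ?_, ?_⟩
    · rw [Finset.mem_product, Finset.mem_range, Finset.mem_range]
      constructor <;> omega
    · rw [if_pos h1, Finset.mem_image]
      exact ⟨(p, q), Finset.mem_product.mpr ⟨h3, h4⟩, rfl⟩

lemma mem_TT {n : ℕ} {w : ℕ → Equiv.Perm ℕ} {k x y : ℕ} :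
    (k, x, y) ∈ TT n w ↔ 1 ≤ k ∧ k ≤ n ∧ (x, y) ∈ invF (w k) (suppBound (w k)) := by
  rw [TT, Finset.mem_biUnion]
  constructor
  · rintro ⟨k', hk', hmem⟩
    rw [Finset.mem_Icc] at hk'
    rw [Finset.mem_image] at hmem
    obtain ⟨pq, hpq, heq⟩ := hmem
    have : k = k' ∧ x = pq.1 ∧ y = pq.2 := by simpa [Prod.ext_iff] using heq.symm
    obtain ⟨rfl, rfl, rfl⟩ := this
    exact ⟨hk'.1, hk'.2, hpq⟩
  · rintro ⟨h1, h2, h3⟩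
    exact ⟨k, Finset.mem_Icc.mpr ⟨h1, h2⟩, Finset.mem_image.mpr ⟨(x, y), h3, rfl⟩⟩

lemma card_DD {n : ℕ} {e : ℕ → ℕ} {r : ℕ → ℕ → ℕ} {w : ℕ → Equiv.Perm ℕ}
    (hrk : RankEq n e w r) : (DD n e w).card = codim n r := by
  rw [DD, Finset.card_biUnion]
  · rw [Finset.sum_product, codim]
    apply Finset.sum_congr rfl
    intro i hi
    apply Finset.sum_congr rfl
    intro j hj
    rw [Finset.mem_range] at hi hj
    split_ifs with hij
    · rw [Finset.card_image_of_injOn (by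
        intro a _ b _ hab
        simpa [Prod.ext_iff] using hab)]
      rw [Finset.card_product]
      congr 1
      · -- card AFs = r i (j-1) - r i j
        rw [AFs, Finset.card_sdiff_of_subset (SF_anti e w (by omega)),
          ← rank_eq_card_SF, ← rank_eq_card_SF,
          hrk i (j-1) (by omega) (by omega), hrk i j (by omega) (by omega)]
      · -- card BFs = r (i+1) j - r i j
        have hsplit := Finset.card_filter_add_card_filter_not
          (s := SF e w (i+1) j) (p := fun q => w (i + 1) q < e i)
        have h1 : (SF e w (i+1) j).card = r (i+1) j := by
          rw [← rank_eq_card_SF, hrk (i+1) j (by omega) (by omega)]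
        have h2 : ((SF e w (i+1) j).filter fun q => w (i + 1) q < e i).card = r i j := by
          rw [← card_SF_step e w hij, ← rank_eq_card_SF, hrk i j (by omega) (by omega)]
        have h3 : BFs e w i j = (SF e w (i+1) j).filter fun q => ¬ (w (i + 1) q < e i) := by
          rw [BFs]
          apply Finset.filter_congr
          intro q _
          simp [not_lt]
        rw [h3]
        omega
    · simp
  · intro ij _ ij' _ hne
    simp only [Function.onFun]
    rw [Finset.disjoint_left]
    intro a ha ha'
    apply hne
    split_ifs at ha ha' with h1 h2
    all_goals first
      | exact absurd ha (Finset.notMem_empty _)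
      | exact absurd ha' (Finset.notMem_empty _)
      | skip
    rw [Finset.mem_image] at ha ha'
    obtain ⟨pq, _, heq⟩ := ha
    obtain ⟨pq', _, heq'⟩ := ha'
    have e1 : ij.1 = a.1 ∧ ij.2 = a.2.1 := by
      constructor <;> (rw [← heq])
    have e2 : ij'.1 = a.1 ∧ ij'.2 = a.2.1 := by
      constructor <;> (rw [← heq'])
    ext
    · omega
    · omega

lemma card_TT {n : ℕ} {e : ℕ → ℕ} {w : ℕ → Equiv.Perm ℕ} (hw : IsLace n e w) :
    (TT n w).card = diagLength n w := by
  rw [TT, Finset.card_biUnion]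
  · rw [diagLength]
    apply Finset.sum_congr rfl
    intro k hk
    rw [Finset.mem_Icc] at hk
    rw [Finset.card_image_of_injOn (by
      intro a _ b _ hab
      simpa [Prod.ext_iff] using hab)]
    exact (ell_eq_card_invF (suppBound_spec (hw.2 k hk.1 hk.2).1)).symm
  · intro k _ k' _ hne
    simp only [Function.onFun]
    rw [Finset.disjoint_left]
    intro a ha ha'
    apply hne
    rw [Finset.mem_image] at ha ha'
    obtain ⟨pq, _, heq⟩ := ha
    obtain ⟨pq', _, heq'⟩ := ha'
    rw [← heq] at heq'
    exact (congrArg Prod.fst heq').symm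

end LowerBound

section Injection

variable {n : ℕ} {e : ℕ → ℕ} {w : ℕ → Equiv.Perm ℕ}

lemma survA {i j p : ℕ} (hij : i < j) (hp : p ∈ AFs e w i j) :
    p < e i ∧ (∀ m, i ≤ m → m ≤ j - 1 → chain w i m p < e m) ∧ e j ≤ chain w i j p := by
  rw [AFs, Finset.mem_sdiff, mem_SF, mem_SF] at hp
  obtain ⟨⟨hpe, hsurv⟩, hnot⟩ := hp
  refine ⟨hpe, ?_, ?_⟩
  · intro m hm1 hm2
    rcases Nat.eq_or_lt_of_le hm1 with h | h
    · rw [← h, chain_self]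
      exact hpe
    · exact hsurv m h hm2
  · push_neg at hnot
    obtain ⟨k, hk1, hk2, hk3⟩ := hnot hpe
    have hkj : k = j := by
      by_contra hne
      have := hsurv k hk1 (by omega)
      omega
    subst hkj
    omega

lemma survB {i j q : ℕ} (hij : i < j) (hq : q ∈ BFs e w i j) :
    e i ≤ w (i + 1) q ∧ ∀ m, i + 1 ≤ m → m ≤ j → chain w i m (w (i + 1) q) < e m := by
  rw [BFs, Finset.mem_filter, mem_SF] at hq
  obtain ⟨⟨hqe, hsurv⟩, hge⟩ := hq
  refine ⟨hge, fun m hm1 hm2 => ?_⟩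
  rw [chain_shift w hm1]
  rcases Nat.eq_or_lt_of_le hm1 with h | h
  · rw [← h, chain_self]
    exact hqe
  · exact hsurv m h hm2

noncomputable def kky (w : ℕ → Equiv.Perm ℕ) (i j p q : ℕ) : ℕ :=
  sInf {k | i < k ∧ k ≤ j ∧ chain w i k (w (i + 1) q) < chain w i k p}

lemma kky_spec {i j p q : ℕ} (hij : i < j) (hp : p ∈ AFs e w i j) (hq : q ∈ BFs e w i j) :
    i < kky w i j p q ∧ kky w i j p q ≤ j ∧
      chain w i (kky w i j p q) (w (i + 1) q) < chain w i (kky w i j p q) p ∧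
      w (kky w i j p q) (chain w i (kky w i j p q) p) <
        w (kky w i j p q) (chain w i (kky w i j p q) (w (i + 1) q)) := by
  obtain ⟨hpe, hpsurv, hpdie⟩ := survA hij hp
  obtain ⟨hqge, hqsurv⟩ := survB hij hq
  have hjmem : j ∈ {k | i < k ∧ k ≤ j ∧ chain w i k (w (i + 1) q) < chain w i k p} := by
    refine ⟨hij, le_rfl, ?_⟩
    have h1 := hqsurv j (by omega) le_rfl
    omega
  have hmem := Nat.sInf_mem (Set.nonempty_of_mem hjmem)
  simp only [kky]
  set k := sInf {k | i < k ∧ k ≤ j ∧ chain w i k ((w (i + 1)) q) < chain w i k p} with hk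
  obtain ⟨hik, hkj, hlt⟩ := hmem
  refine ⟨hik, hkj, hlt, ?_⟩
  have hstep : k = (k - 1) + 1 := by omega
  have hchp : w k (chain w i k p) = chain w i (k - 1) p := by
    conv_lhs => rw [hstep]
    rw [chain_down w (by omega)]
  have hchq : w k (chain w i k (w (i + 1) q)) = chain w i (k - 1) (w (i + 1) q) := by
    conv_lhs => rw [hstep]
    rw [chain_down w (by omega)]
  rw [hchp, hchq]
  have hne : chain w i (k - 1) p ≠ chain w i (k - 1) (w (i + 1) q) := by
    intro hcontra
    have h1 : chain w i k p = chain w i k (w (i + 1) q) := by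
      conv_lhs => rw [hstep]
      conv_rhs => rw [hstep]
      rw [chain_succ_of_lt w (by omega), chain_succ_of_lt w (by omega), hcontra]
    omega
  rcases Nat.eq_or_lt_of_le (show i ≤ k - 1 by omega) with hcase | hcase
  · -- k - 1 = i
    rw [← hcase, chain_self, chain_self]
    have := hpe
    have := hqge
    rw [← hcase, chain_self, chain_self] at hne
    omega
  · -- i < k - 1 : minimality
    have hnotmem : k - 1 ∉ {k | i < k ∧ k ≤ j ∧ chain w i k (w (i + 1) q) < chain w i k p} := by
      apply Nat.notMem_of_lt_sInf
      omega
    simp only [Set.mem_setOf_eq, not_and, not_lt] at hnotmem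
    have hle := hnotmem hcase (by omega)
    omega

noncomputable def FF (w : ℕ → Equiv.Perm ℕ) : ℕ × ℕ × ℕ × ℕ → ℕ × ℕ × ℕ := fun x =>
  (kky w x.1 x.2.1 x.2.2.1 x.2.2.2,
   chain w x.1 (kky w x.1 x.2.1 x.2.2.1 x.2.2.2) (w (x.1 + 1) x.2.2.2),
   chain w x.1 (kky w x.1 x.2.1 x.2.2.1 x.2.2.2) x.2.2.1)

lemma FF_mapsTo (hw : IsLace n e w) :
    ∀ x ∈ DD n e w, FF w x ∈ TT n w := by
  rintro ⟨i, j, p, q⟩ hx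
  rw [mem_DD] at hx
  obtain ⟨hij, hjn, hp, hq⟩ := hx
  obtain ⟨h1, h2, h3, h4⟩ := kky_spec hij hp hq
  rw [mem_TT]
  simp only [FF, kky]
  simp only [kky] at h1 h2 h3 h4
  refine ⟨by omega, by omega, ?_⟩
  exact mem_invF (suppBound_spec (hw.2 _ (by omega) (by omega)).1) h3 h4

lemma FF_injOn (hw : IsLace n e w) : Set.InjOn (FF w) ↑(DD n e w) := by
  rintro ⟨i, j, p, q⟩ hx ⟨i', j', p', q'⟩ hx' heq
  rw [Finset.mem_coe, mem_DD] at hx hx'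
  obtain ⟨hij, hjn, hp, hq⟩ := hx
  obtain ⟨hij', hjn', hp', hq'⟩ := hx'
  obtain ⟨hk1, hk2, hk3, hk4⟩ := kky_spec hij hp hq
  obtain ⟨hk1', hk2', hk3', hk4'⟩ := kky_spec hij' hp' hq'
  simp only [FF, Prod.mk.injEq] at heq
  obtain ⟨hkk, hxx, hyy⟩ := heq
  set k := kky w i j p q with hdefk
  rw [← hkk] at hk1' hk2' hk3' hk4' hxx hyy
  obtain ⟨hpe, hpsurv, hpdie⟩ := survA hij hp
  obtain ⟨hqge, hqsurv⟩ := survB hij hq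
  obtain ⟨hpe', hpsurv', hpdie'⟩ := survA hij' hp'
  obtain ⟨hqge', hqsurv'⟩ := survB hij' hq'
  -- step 1 : i = i'
  have hii : i = i' := by
    by_contra hne
    rcases Nat.lt_or_ge i i' with hlt | hge
    · have hdown := chain_eq_down (w := w) (w (i+1) q) (w (i'+1) q')
        (show i ≤ i' by omega) le_rfl (by omega) hxx
      rw [chain_self] at hdown
      have hlow := hqsurv i' (by omega) (by omega)
      omega
    · have hlt' : i' < i := by omega
      have hdown := chain_eq_down (w := w) (w (i+1) q) (w (i'+1) q')
        le_rfl (show i' ≤ i by omega) (by omega) hxx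
      rw [chain_self] at hdown
      have hlow := hqsurv' i (by omega) (by omega)
      omega
  subst hii
  -- step 2 : q = q'
  have hqq : q = q' := by
    have hdown := chain_eq_down (w := w) (w (i+1) q) (w (i+1) q')
      (show i ≤ i + 1 by omega) (by omega) (by omega) hxx
    rw [chain_shift w le_rfl, chain_shift w le_rfl, chain_self, chain_self] at hdown
    exact hdown
  subst hqq
  -- step 3 : j = j'
  have hjj : j = j' := by
    by_contra hne
    rcases Nat.lt_or_ge j j' with hlt | hge
    · have hup := chain_eq_up (w := w) p p' (by omega) (by omega) (show k ≤ j by omega) hyy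
      have hlow := hpsurv' j (by omega) (by omega)
      omega
    · have hlt' : j' < j := by omega
      have hup := chain_eq_up (w := w) p p' (by omega) (by omega) (show k ≤ j' by omega) hyy
      have hlow := hpsurv j' (by omega) (by omega)
      omega
  subst hjj
  -- step 4 : p = p'
  have hpp : p = p' := by
    have hdown := chain_eq_down (w := w) p p' le_rfl le_rfl (by omega) hyy
    rw [chain_self, chain_self] at hdown
    exact hdown
  subst hpp
  rfl

theorem lower_bound (hw : IsLace n e w) {r : ℕ → ℕ → ℕ} (hrk : RankEq n e w r) :
    codim n r ≤ diagLength n w := by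
  rw [← card_DD hrk, ← card_TT hw]
  exact Finset.card_le_card_of_injOn (FF w) (FF_mapsTo hw) (FF_injOn hw)

end Injection

section Construction

/-- tail count: number of strands starting at `a` with end `≥ b`. -/
def Ts (n : ℕ) (s : ℕ → ℕ → ℕ) (a b : ℕ) : ℕ := ∑ b' ∈ Finset.Icc b n, s a b'

/-- number of strands in bounds at column `c` starting before `a`. -/
def Gs (n : ℕ) (s : ℕ → ℕ → ℕ) (c a : ℕ) : ℕ := ∑ a' ∈ Finset.range a, Ts n s a' c

/-- number of strands ending at `c - 1` starting before `a`. -/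
def Ds (s : ℕ → ℕ → ℕ) (c a : ℕ) : ℕ := ∑ a' ∈ Finset.range a, s a' (c - 1)

lemma Ts_split (n : ℕ) (s : ℕ → ℕ → ℕ) (a b : ℕ) (h : b ≤ n) :
    Ts n s a b = s a b + Ts n s a (b + 1) := by
  rw [Ts, Ts, show Finset.Icc b n = insert b (Finset.Icc (b+1) n) by
    ext x; simp [Finset.mem_Icc, Finset.mem_insert]; omega,
    Finset.sum_insert (by simp)]

lemma Gs_mono (n : ℕ) (s : ℕ → ℕ → ℕ) (c : ℕ) {a a' : ℕ} (h : a ≤ a') :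
    Gs n s c a ≤ Gs n s c a' :=
  Finset.sum_le_sum_of_subset (Finset.range_subset_range.mpr h)

lemma Ds_mono (s : ℕ → ℕ → ℕ) (c : ℕ) {a a' : ℕ} (h : a ≤ a') :
    Ds s c a ≤ Ds s c a' :=
  Finset.sum_le_sum_of_subset (Finset.range_subset_range.mpr h)

lemma Gs_succ (n : ℕ) (s : ℕ → ℕ → ℕ) (c a : ℕ) :
    Gs n s c (a + 1) = Gs n s c a + Ts n s a c := Finset.sum_range_succ _ _

lemma Ds_succ (s : ℕ → ℕ → ℕ) (c a : ℕ) :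
    Ds s c (a + 1) = Ds s c a + s a (c - 1) := Finset.sum_range_succ _ _

lemma Gsplit (n : ℕ) (s : ℕ → ℕ → ℕ) {c : ℕ} (hc1 : 1 ≤ c) (hcn : c ≤ n) (a : ℕ) :
    Gs n s (c - 1) a = Gs n s c a + Ds s c a := by
  rw [Gs, Gs, Ds, ← Finset.sum_add_distrib]
  apply Finset.sum_congr rfl
  intro a' _
  have h : Ts n s a' (c - 1) = s a' (c - 1) + Ts n s a' c := by
    have := Ts_split n s a' (c - 1) (by omega)
    rwa [show c - 1 + 1 = c by omega] at this
  omega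

/-- the start-column of the strand at position `q` of column `c`. -/
def AA (n : ℕ) (s : ℕ → ℕ → ℕ) (c q : ℕ) : ℕ :=
  Nat.findGreatest (fun a => Gs n s c a ≤ q) c

/-- the start-column of the `k`-th dying strand of column `c - 1`. -/
def AA' (s : ℕ → ℕ → ℕ) (c k : ℕ) : ℕ :=
  Nat.findGreatest (fun a => Ds s c a ≤ k) c

lemma AA_spec (n : ℕ) (s : ℕ → ℕ → ℕ) {c q : ℕ} (h : q < Gs n s c (c + 1)) :
    Gs n s c (AA n s c q) ≤ q ∧ q < Gs n s c (AA n s c q + 1) ∧ AA n s c q ≤ c := by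
  unfold AA
  set m := Nat.findGreatest (fun a => Gs n s c a ≤ q) c with hm
  have h0 : Gs n s c 0 ≤ q := by simp [Gs]
  have hle : Gs n s c m ≤ q := Nat.findGreatest_spec (P := fun a => Gs n s c a ≤ q) (Nat.zero_le c) h0
  have hbd : m ≤ c := hm ▸ Nat.findGreatest_le c
  refine ⟨hle, ?_, hbd⟩
  rcases Nat.eq_or_lt_of_le hbd with hc | hc
  · rw [hc]
    exact h
  · by_contra hcon
    push_neg at hcon
    have hh := Nat.le_findGreatest (P := fun a => Gs n s c a ≤ q) (show m + 1 ≤ c by omega) hcon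
    rw [← hm] at hh
    omega

lemma AA_eq (n : ℕ) (s : ℕ → ℕ → ℕ) {c q a : ℕ} (ha : a ≤ c)
    (h1 : Gs n s c a ≤ q) (h2 : q < Gs n s c (a + 1)) : AA n s c q = a := by
  unfold AA
  set m := Nat.findGreatest (fun a => Gs n s c a ≤ q) c with hm
  have hge : a ≤ m := hm ▸ Nat.le_findGreatest ha h1
  rcases Nat.eq_or_lt_of_le hge with hc | hc
  · omega
  · exfalso
    have h0 : Gs n s c 0 ≤ q := by simp [Gs]
    have hle : Gs n s c m ≤ q := Nat.findGreatest_spec (P := fun a => Gs n s c a ≤ q) (Nat.zero_le c) h0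
    have := Gs_mono n s c (show a + 1 ≤ m by omega)
    omega

lemma AA'_spec (s : ℕ → ℕ → ℕ) {c k : ℕ} (h : k < Ds s c c) :
    Ds s c (AA' s c k) ≤ k ∧ k < Ds s c (AA' s c k + 1) ∧ AA' s c k < c := by
  unfold AA'
  set m := Nat.findGreatest (fun a => Ds s c a ≤ k) c with hm
  have h0 : Ds s c 0 ≤ k := by simp [Ds]
  have hle : Ds s c m ≤ k := Nat.findGreatest_spec (P := fun a => Ds s c a ≤ k) (Nat.zero_le c) h0
  have hbd : m ≤ c := hm ▸ Nat.findGreatest_le c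
  have hlt : m < c := by
    rcases Nat.eq_or_lt_of_le hbd with hc | hc
    · rw [hc] at hle
      omega
    · exact hc
  refine ⟨hle, ?_, hlt⟩
  by_contra hcon
  push_neg at hcon
  have hh := Nat.le_findGreatest (P := fun a => Ds s c a ≤ k) (show m + 1 ≤ c by omega) hcon
  rw [← hm] at hh
  omega

lemma AA'_eq (s : ℕ → ℕ → ℕ) {c k a : ℕ} (ha : a ≤ c)
    (h1 : Ds s c a ≤ k) (h2 : k < Ds s c (a + 1)) : AA' s c k = a := by
  unfold AA'
  set m := Nat.findGreatest (fun a => Ds s c a ≤ k) c with hm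
  have hge : a ≤ m := hm ▸ Nat.le_findGreatest ha h1
  rcases Nat.eq_or_lt_of_le hge with hc | hc
  · omega
  · exfalso
    have h0 : Ds s c 0 ≤ k := by simp [Ds]
    have hle : Ds s c m ≤ k := Nat.findGreatest_spec (P := fun a => Ds s c a ≤ k) (Nat.zero_le c) h0
    have := Ds_mono s c (show a + 1 ≤ m by omega)
    omega

end Construction

section Wdef

variable (n : ℕ) (e : ℕ → ℕ) (s : ℕ → ℕ → ℕ)

/-- the forward map of the permutation of column `c` of the leftmost diagram:
it maps positions in column `c` to positions in column `c - 1`. -/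
def wfun (c q : ℕ) : ℕ :=
  if q < Gs n s c c then q + Ds s c (AA n s c q)
  else if q < e c then e (c - 1) + (q - Gs n s c c)
  else if q < e c + Ds s c c then
    (Gs n s (c - 1) (AA' s c (q - e c) + 1) - s (AA' s c (q - e c)) (c - 1))
      + ((q - e c) - Ds s c (AA' s c (q - e c)))
  else q

/-- the inverse of `wfun`. -/
def winv (c v : ℕ) : ℕ :=
  if v < e (c - 1) then
    if v < Gs n s (c - 1) (AA n s (c - 1) v + 1) - s (AA n s (c - 1) v) (c - 1)
    then v - Ds s c (AA n s (c - 1) v)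
    else e c + Ds s c (AA n s (c - 1) v)
      + (v - (Gs n s (c - 1) (AA n s (c - 1) v + 1) - s (AA n s (c - 1) v) (c - 1)))
  else if v < e (c - 1) + (e c - Gs n s c c) then Gs n s c c + (v - e (c - 1))
  else v

variable {n e s}
variable (hse : ∀ c, c ≤ n → e c = Gs n s c (c + 1)) {c : ℕ} (hc1 : 1 ≤ c) (hcn : c ≤ n)

include hse hc1 hcn

lemma hE : e c = Gs n s c (c + 1) := hse c hcn

lemma hE' : e (c - 1) = Gs n s (c - 1) c := by
  have h := hse (c - 1) (by omega)
  rwa [show c - 1 + 1 = c by omega] at h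

lemma hKey : Gs n s c c + Ds s c c = e (c - 1) := by
  rw [hE' hse hc1 hcn]
  exact (Gsplit n s hc1 hcn c).symm

lemma hGle : Gs n s c c ≤ e c := by
  rw [hE hse hc1 hcn]
  exact Gs_mono n s c (by omega)

lemma winv_wfun (q : ℕ) : winv n e s c (wfun n e s c q) = q := by
  have hE1 := hE hse hc1 hcn
  have hE2 := hE' hse hc1 hcn
  have hK := hKey hse hc1 hcn
  have hGe := hGle hse hc1 hcn
  rw [wfun]
  split_ifs with h1 h2 h3
  · -- continuing
    obtain ⟨ha1, ha2, ha3⟩ := AA_spec n s (show q < Gs n s c (c + 1) by omega)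
    set a := AA n s c q with haa
    have hac : a < c := by
      rcases Nat.eq_or_lt_of_le ha3 with h | h
      · rw [h] at ha1
        omega
      · exact h
    have hds := Ds_succ s c a
    have hg1 := Gsplit n s hc1 hcn a
    have hg2 := Gsplit n s hc1 hcn (a + 1)
    have hmono : Gs n s (c-1) (a+1) ≤ Gs n s (c-1) c := Gs_mono n s (c-1) (by omega)
    have hAA : AA n s (c - 1) (q + Ds s c a) = a := by
      apply AA_eq n s (show a ≤ c - 1 by omega) <;> omega
    rw [winv, hAA]
    split_ifs with hb1 hb2 <;> omega
  · -- born
    rw [winv]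
    split_ifs with hb1 hb2 <;> omega
  · -- dying
    set k := q - e c with hkk
    have hkd : k < Ds s c c := by omega
    obtain ⟨ha1, ha2, ha3⟩ := AA'_spec s hkd
    set a := AA' s c k with haa
    have hds := Ds_succ s c a
    have hg1 := Gsplit n s hc1 hcn a
    have hg2 := Gsplit n s hc1 hcn (a + 1)
    have hgs := Gs_succ n s (c - 1) a
    have hts : Ts n s a (c - 1) = s a (c - 1) + Ts n s a c := by
      have h := Ts_split n s a (c - 1) (by omega)
      rwa [show c - 1 + 1 = c by omega] at h
    have hmono : Gs n s (c-1) (a+1) ≤ Gs n s (c-1) c := Gs_mono n s (c-1) (by omega)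
    have hAA : AA n s (c - 1)
        ((Gs n s (c - 1) (a + 1) - s a (c - 1)) + (k - Ds s c a)) = a := by
      apply AA_eq n s (show a ≤ c - 1 by omega) <;> omega
    rw [winv, hAA]
    split_ifs with hb1 hb2 <;> omega
  · -- identity
    rw [winv]
    split_ifs with hb1 hb2 <;> omega

lemma wfun_winv (v : ℕ) : wfun n e s c (winv n e s c v) = v := by
  have hE1 := hE hse hc1 hcn
  have hE2 := hE' hse hc1 hcn
  have hK := hKey hse hc1 hcn
  have hGe := hGle hse hc1 hcn
  rw [winv]
  split_ifs with h1 h2 h3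
  · -- in bounds at c - 1, continuing
    obtain ⟨ha1, ha2, ha3⟩ := AA_spec n s (show v < Gs n s (c - 1) ((c - 1) + 1) by
      rw [show c - 1 + 1 = c by omega]
      omega)
    set a := AA n s (c - 1) v with haa
    have hac : a ≤ c - 1 := by omega
    have hds := Ds_succ s c a
    have hg1 := Gsplit n s hc1 hcn a
    have hg2 := Gsplit n s hc1 hcn (a + 1)
    have hmono : Gs n s c (a+1) ≤ Gs n s c c := Gs_mono n s c (by omega)
    have hAA : AA n s c (v - Ds s c a) = a := by
      apply AA_eq n s (show a ≤ c by omega) <;> omega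
    rw [wfun, hAA]
    split_ifs with hb1 hb2 hb3 <;> omega
  · -- in bounds at c - 1, dying
    obtain ⟨ha1, ha2, ha3⟩ := AA_spec n s (show v < Gs n s (c - 1) ((c - 1) + 1) by
      rw [show c - 1 + 1 = c by omega]
      omega)
    set a := AA n s (c - 1) v with haa
    have hac : a ≤ c - 1 := by omega
    have hds := Ds_succ s c a
    have hg1 := Gsplit n s hc1 hcn a
    have hg2 := Gsplit n s hc1 hcn (a + 1)
    have hgs := Gs_succ n s (c - 1) a
    have hts : Ts n s a (c - 1) = s a (c - 1) + Ts n s a c := by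
      have h := Ts_split n s a (c - 1) (by omega)
      rwa [show c - 1 + 1 = c by omega] at h
    have hdmono : Ds s c (a + 1) ≤ Ds s c c := Ds_mono s c (by omega)
    have hAA' : AA' s c (Ds s c a + (v - (Gs n s (c - 1) (a + 1) - s a (c - 1)))) = a := by
      apply AA'_eq s (show a ≤ c by omega) <;> omega
    rw [wfun]
    have harg : e c + Ds s c a + (v - (Gs n s (c - 1) (a + 1) - s a (c - 1))) - e c
        = Ds s c a + (v - (Gs n s (c - 1) (a + 1) - s a (c - 1))) := by omega
    rw [harg, hAA']
    split_ifs with hb1 hb2 hb3 <;> omega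
  · -- born
    rw [wfun]
    split_ifs with hb1 hb2 hb3 <;> omega
  · -- identity
    rw [wfun]
    split_ifs with hb1 hb2 hb3 <;> omega

end Wdef

section Wlace

variable {n : ℕ} {e : ℕ → ℕ} {s : ℕ → ℕ → ℕ}
variable (hse : ∀ c, c ≤ n → e c = Gs n s c (c + 1)) {c : ℕ} (hc1 : 1 ≤ c) (hcn : c ≤ n)

include hse hc1 hcn

lemma wfun_mono_tail (k : ℕ) (hk : e c ≤ k) : wfun n e s c k ≤ wfun n e s c (k + 1) := by
  have hE1 := hE hse hc1 hcn
  have hE2 := hE' hse hc1 hcn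
  have hK := hKey hse hc1 hcn
  have hGe := hGle hse hc1 hcn
  by_cases hd1 : k < e c + Ds s c c
  · obtain ⟨ha1, ha2, ha3⟩ := AA'_spec s (show k - e c < Ds s c c by omega)
    have hds := Ds_succ s c (AA' s c (k - e c))
    have hgs := Gs_succ n s (c - 1) (AA' s c (k - e c))
    have hts : Ts n s (AA' s c (k - e c)) (c - 1)
        = s (AA' s c (k - e c)) (c - 1) + Ts n s (AA' s c (k - e c)) c := by
      have h := Ts_split n s (AA' s c (k - e c)) (c - 1) (by omega)
      rwa [show c - 1 + 1 = c by omega] at h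
    have hmono : Gs n s (c - 1) (AA' s c (k - e c) + 1) ≤ Gs n s (c - 1) c :=
      Gs_mono n s (c - 1) (by omega)
    by_cases hd2 : k + 1 < e c + Ds s c c
    · obtain ⟨hb1, hb2, hb3⟩ := AA'_spec s (show k + 1 - e c < Ds s c c by omega)
      have hds2 := Ds_succ s c (AA' s c (k + 1 - e c))
      have hgs2 := Gs_succ n s (c - 1) (AA' s c (k + 1 - e c))
      have hts2 : Ts n s (AA' s c (k + 1 - e c)) (c - 1)
          = s (AA' s c (k + 1 - e c)) (c - 1) + Ts n s (AA' s c (k + 1 - e c)) c := by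
        have h := Ts_split n s (AA' s c (k + 1 - e c)) (c - 1) (by omega)
        rwa [show c - 1 + 1 = c by omega] at h
      have hcmp : AA' s c (k - e c) ≤ AA' s c (k + 1 - e c) := by
        by_contra hcon
        push_neg at hcon
        have := Ds_mono s c (show AA' s c (k + 1 - e c) + 1 ≤ AA' s c (k - e c) by omega)
        omega
      rcases Nat.eq_or_lt_of_le hcmp with heq | hlt
      · have hv1 : Gs n s (c - 1) (AA' s c (k - e c) + 1)
            = Gs n s (c - 1) (AA' s c (k + 1 - e c) + 1) := by rw [heq]
        have hv2 : Ds s c (AA' s c (k - e c)) = Ds s c (AA' s c (k + 1 - e c)) := by rw [heq]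
        have hv3 : s (AA' s c (k - e c)) (c - 1) = s (AA' s c (k + 1 - e c)) (c - 1) := by
          rw [heq]
        rw [wfun, wfun]
        split_ifs <;> omega
      · have hmm : Gs n s (c - 1) (AA' s c (k - e c) + 1)
            ≤ Gs n s (c - 1) (AA' s c (k + 1 - e c)) := Gs_mono n s (c - 1) (by omega)
        rw [wfun, wfun]
        split_ifs <;> omega
    · rw [wfun, wfun]
      split_ifs <;> omega
  · rw [wfun, wfun]
    split_ifs <;> omega

lemma winv_mono_tail (k : ℕ) (hk : e (c - 1) ≤ k) :
    winv n e s c k ≤ winv n e s c (k + 1) := by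
  have hE1 := hE hse hc1 hcn
  have hE2 := hE' hse hc1 hcn
  have hK := hKey hse hc1 hcn
  have hGe := hGle hse hc1 hcn
  rw [winv, winv]
  split_ifs <;> omega

lemma wfun_id_tail (q : ℕ) (hq : e c + Ds s c c ≤ q) : wfun n e s c q = q := by
  have hGe := hGle hse hc1 hcn
  rw [wfun]
  split_ifs <;> omega

end Wlace

/-- The leftmost lace diagram associated to strand multiplicities `s`. -/
noncomputable def WW (n : ℕ) (e : ℕ → ℕ) (s : ℕ → ℕ → ℕ)
    (hse : ∀ c, c ≤ n → e c = Gs n s c (c + 1)) : ℕ → Equiv.Perm ℕ := fun c =>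
  if h : 1 ≤ c ∧ c ≤ n then
    ⟨wfun n e s c, winv n e s c, winv_wfun hse h.1 h.2, wfun_winv hse h.1 h.2⟩
  else 1

section WWfacts

variable {n : ℕ} {e : ℕ → ℕ} {s : ℕ → ℕ → ℕ}
variable (hse : ∀ c, c ≤ n → e c = Gs n s c (c + 1)) {c : ℕ}

lemma WW_apply (hc1 : 1 ≤ c) (hcn : c ≤ n) (q : ℕ) :
    WW n e s hse c q = wfun n e s c q := by
  rw [WW, dif_pos ⟨hc1, hcn⟩]
  rfl

lemma WW_inv_apply (hc1 : 1 ≤ c) (hcn : c ≤ n) (v : ℕ) :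
    (WW n e s hse c)⁻¹ v = winv n e s c v := by
  rw [WW, dif_pos ⟨hc1, hcn⟩]
  rfl

lemma WW_one {k : ℕ} (h : k = 0 ∨ n < k) : WW n e s hse k = 1 := by
  rw [WW, dif_neg (by omega)]

lemma WW_lace : IsLace n e (WW n e s hse) := by
  constructor
  · intro i hi
    exact WW_one hse hi
  · intro i hi1 hi2
    refine ⟨?_, ?_, ?_⟩
    · apply Set.Finite.subset (Set.finite_Iio (e i + Ds s i i))
      intro x hx
      simp only [Set.mem_setOf_eq] at hx
      rw [Set.mem_Iio]
      by_contra hcon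
      push_neg at hcon
      exact hx (by rw [WW_apply hse hi1 hi2, wfun_id_tail hse hi1 hi2 x hcon])
    · intro k hk
      by_contra hcon
      push_neg at hcon
      rw [WW_apply hse hi1 hi2, WW_apply hse hi1 hi2] at hk
      have := wfun_mono_tail hse hi1 hi2 k hcon
      omega
    · intro k hk
      by_contra hcon
      push_neg at hcon
      rw [WW_inv_apply hse hi1 hi2, WW_inv_apply hse hi1 hi2] at hk
      have := winv_mono_tail hse hi1 hi2 k (by omega)
      omega

end WWfacts

section Strands

variable {n : ℕ} {e : ℕ → ℕ} {s : ℕ → ℕ → ℕ}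
variable (hse : ∀ c, c ≤ n → e c = Gs n s c (c + 1))

/-- Position of strand `(a, b, t)` in column `c`. -/
def posn (n : ℕ) (s : ℕ → ℕ → ℕ) (c a b t : ℕ) : ℕ :=
  Gs n s c a + Ts n s a (b + 1) + t

lemma Ts_anti (a : ℕ) {b b' : ℕ} (h : b ≤ b') : Ts n s a b' ≤ Ts n s a b :=
  Finset.sum_le_sum_of_subset (by
    intro x hx
    simp only [Finset.mem_Icc] at hx ⊢
    omega)

lemma posn_ub {c a b t : ℕ} (ha : a ≤ c) (hb : c ≤ b) (hbn : b ≤ n) (ht : t < s a b) :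
    posn n s c a b t < Gs n s c (a + 1) := by
  have h1 := Ts_split n s a b hbn
  have h2 : Ts n s a b ≤ Ts n s a c := Ts_anti (n := n) (s := s) a hb
  have h3 := Gs_succ n s c a
  rw [posn]
  omega

include hse in
lemma posn_lt_e {c a b t : ℕ} (hcn : c ≤ n) (ha : a ≤ c) (hb : c ≤ b) (hbn : b ≤ n)
    (ht : t < s a b) : posn n s c a b t < e c := by
  have h1 := posn_ub (n := n) (s := s) ha hb hbn ht
  have h2 : Gs n s c (a + 1) ≤ Gs n s c (c + 1) := Gs_mono n s c (by omega)
  rw [hse c hcn]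
  omega

variable {c : ℕ} (hc1 : 1 ≤ c) (hcn : c ≤ n)

include hse hc1 hcn

lemma WW_cont {a b t : ℕ} (ha : a < c) (hb : c ≤ b) (hbn : b ≤ n) (ht : t < s a b) :
    WW n e s hse c (posn n s c a b t) = posn n s (c - 1) a b t := by
  rw [WW_apply hse hc1 hcn]
  have hub := posn_ub (n := n) (s := s) (show a ≤ c by omega) hb hbn ht
  have hlb : Gs n s c a ≤ posn n s c a b t := by
    rw [posn]
    omega
  have hmono : Gs n s c (a + 1) ≤ Gs n s c c := Gs_mono n s c (by omega)
  have hAA : AA n s c (posn n s c a b t) = a :=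
    AA_eq n s (by omega) hlb hub
  have hg1 := Gsplit n s hc1 hcn a
  rw [wfun, if_pos (by omega), hAA, posn, posn]
  omega

lemma WW_born {b t : ℕ} (hb : c ≤ b) (hbn : b ≤ n) (ht : t < s c b) :
    WW n e s hse c (posn n s c c b t) = e (c - 1) + (Ts n s c (b + 1) + t) := by
  rw [WW_apply hse hc1 hcn]
  have hub := posn_lt_e (n := n) (s := s) hse hcn le_rfl hb hbn ht
  rw [wfun, if_neg (by rw [posn]; omega), if_pos hub, posn]
  omega

lemma WW_death {a t : ℕ} (ha : a < c) (ht : t < s a (c - 1)) :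
    (WW n e s hse c)⁻¹ (posn n s (c - 1) a (c - 1) t) = e c + Ds s c a + t := by
  rw [WW_inv_apply hse hc1 hcn]
  have hE2 := hE' hse hc1 hcn
  have hgs := Gs_succ n s (c - 1) a
  have hts : Ts n s a (c - 1) = s a (c - 1) + Ts n s a c := by
    have h := Ts_split n s a (c - 1) (by omega)
    rwa [show c - 1 + 1 = c by omega] at h
  have hpos : posn n s (c - 1) a (c - 1) t = Gs n s (c - 1) a + Ts n s a c + t := by
    rw [posn, show c - 1 + 1 = c by omega]
  have hub : posn n s (c - 1) a (c - 1) t < Gs n s (c - 1) (a + 1) := by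
    rw [hpos]
    omega
  have hmono : Gs n s (c - 1) (a + 1) ≤ Gs n s (c - 1) c := Gs_mono n s (c - 1) (by omega)
  have hAA : AA n s (c - 1) (posn n s (c - 1) a (c - 1) t) = a :=
    AA_eq n s (by omega) (by rw [hpos]; omega) hub
  rw [winv, if_pos (by omega), hAA]
  rw [if_neg (by omega)]
  omega

end Strands

section RankOfWW

variable {n : ℕ} {e : ℕ → ℕ} {s : ℕ → ℕ → ℕ}
variable (hse : ∀ c, c ≤ n → e c = Gs n s c (c + 1))

lemma chain_posn {a i k b t : ℕ} (ha : a ≤ i) (hik : i ≤ k) (hkb : k ≤ b) (hbn : b ≤ n)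
    (ht : t < s a b) :
    chain (WW n e s hse) i k (posn n s i a b t) = posn n s k a b t := by
  induction k, hik using Nat.le_induction with
  | base => rw [chain_self]
  | succ k hik ih =>
    rw [chain_succ_of_lt _ (by omega), ih (by omega)]
    have hcont := WW_cont hse (show 1 ≤ k + 1 by omega) (show k + 1 ≤ n by omega)
      (show a < k + 1 by omega) (show k + 1 ≤ b by omega) hbn ht
    rw [show k + 1 - 1 = k from rfl] at hcont
    rw [← hcont, Equiv.Perm.inv_apply_self]

lemma chain_death {a i b t : ℕ} (ha : a ≤ i) (hib : i ≤ b) (hbn : b + 1 ≤ n)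
    (ht : t < s a b) :
    chain (WW n e s hse) i (b + 1) (posn n s i a b t) = e (b + 1) + Ds s (b + 1) a + t := by
  rw [chain_succ_of_lt _ (by omega), chain_posn hse ha hib le_rfl (by omega) ht]
  have hd := WW_death hse (show 1 ≤ b + 1 by omega) hbn (show a < b + 1 by omega)
    (show t < s a (b + 1 - 1) by simpa using ht)
  rw [show b + 1 - 1 = b from rfl] at hd
  exact hd

include hse in
lemma exists_strand {c q : ℕ} (hc : c ≤ n) (hq : q < e c) :
    ∃ a b t, a ≤ c ∧ c ≤ b ∧ b ≤ n ∧ t < s a b ∧ posn n s c a b t = q := by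
  obtain ⟨ha1, ha2, ha3⟩ := AA_spec n s (show q < Gs n s c (c + 1) by rw [← hse c hc]; omega)
  set a := AA n s c q with haa
  have hx : q - Gs n s c a < Ts n s a c := by
    have := Gs_succ n s c a
    omega
  set x := q - Gs n s c a with hxx
  set b := Nat.findGreatest (fun b => x < Ts n s a b) n with hbb
  have hPb : x < Ts n s a b :=
    Nat.findGreatest_spec (P := fun b => x < Ts n s a b) hc hx
  have hcb : c ≤ b := hbb ▸ Nat.le_findGreatest hc hx
  have hbn : b ≤ n := hbb ▸ Nat.findGreatest_le n
  have hnotP : Ts n s a (b + 1) ≤ x := by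
    rcases Nat.eq_or_lt_of_le hbn with h | h
    · have : Finset.Icc (b + 1) n = ∅ := by
        rw [Finset.Icc_eq_empty_iff]
        omega
      rw [Ts, this, Finset.sum_empty]
      omega
    · by_contra hcon
      push_neg at hcon
      have := Nat.le_findGreatest (P := fun b => x < Ts n s a b) (show b + 1 ≤ n by omega) hcon
      rw [← hbb] at this
      omega
  have hts := Ts_split n s a b hbn
  refine ⟨a, b, x - Ts n s a (b + 1), by omega, hcb, hbn, by omega, ?_⟩
  rw [posn]
  omega

lemma posn_inj {c a b t a' b' t' : ℕ} (ha : a ≤ c) (hb : c ≤ b) (hbn : b ≤ n)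
    (ht : t < s a b) (ha' : a' ≤ c) (hb' : c ≤ b') (hbn' : b' ≤ n) (ht' : t' < s a' b')
    (heq : posn n s c a b t = posn n s c a' b' t') : a = a' ∧ b = b' ∧ t = t' := by
  have haa : a = a' := by
    by_contra hne
    rcases Nat.lt_or_ge a a' with h | h
    · have h1 := posn_ub (n := n) (s := s) ha hb hbn ht
      have h2 : Gs n s c (a + 1) ≤ Gs n s c a' := Gs_mono n s c (by omega)
      have h3 : Gs n s c a' ≤ posn n s c a' b' t' := by
        rw [posn]
        omega
      omega
    · have hlt : a' < a := by omega
      have h1 := posn_ub (n := n) (s := s) ha' hb' hbn' ht'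
      have h2 : Gs n s c (a' + 1) ≤ Gs n s c a := Gs_mono n s c (by omega)
      have h3 : Gs n s c a ≤ posn n s c a b t := by
        rw [posn]
        omega
      omega
  subst haa
  have hbb : b = b' := by
    by_contra hne
    rw [posn, posn] at heq
    rcases Nat.lt_or_ge b b' with h | h
    · have h1 : Ts n s a b' ≤ Ts n s a (b + 1) := Ts_anti (n := n) (s := s) a (by omega)
      have h2 := Ts_split n s a b' hbn'
      omega
    · have hlt : b' < b := by omega
      have h1 : Ts n s a b ≤ Ts n s a (b' + 1) := Ts_anti (n := n) (s := s) a (by omega)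
      have h2 := Ts_split n s a b hbn
      omega
  subst hbb
  rw [posn, posn] at heq
  omega

open scoped Classical in
/-- The finset of strands in bounds at columns `i` through `j`. -/
noncomputable def StF (n : ℕ) (s : ℕ → ℕ → ℕ) (i j : ℕ) : Finset (ℕ × ℕ × ℕ) :=
  (Finset.range (i + 1) ×ˢ Finset.Icc j n).biUnion fun ab =>
    (Finset.range (s ab.1 ab.2)).image fun t => (ab.1, ab.2, t)

lemma mem_StF {i j a b t : ℕ} :
    (a, b, t) ∈ StF n s i j ↔ a ≤ i ∧ j ≤ b ∧ b ≤ n ∧ t < s a b := by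
  rw [StF, Finset.mem_biUnion]
  constructor
  · rintro ⟨ab, hab, hmem⟩
    rw [Finset.mem_product, Finset.mem_range, Finset.mem_Icc] at hab
    rw [Finset.mem_image] at hmem
    obtain ⟨t', ht', heq⟩ := hmem
    have : a = ab.1 ∧ b = ab.2 ∧ t = t' := by simpa [Prod.ext_iff] using heq.symm
    obtain ⟨rfl, rfl, rfl⟩ := this
    rw [Finset.mem_range] at ht'
    exact ⟨by omega, hab.2.1, hab.2.2, ht'⟩
  · rintro ⟨h1, h2, h3, h4⟩
    refine ⟨(a, b), ?_, ?_⟩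
    · rw [Finset.mem_product, Finset.mem_range, Finset.mem_Icc]
      exact ⟨by omega, h2, h3⟩
    · rw [Finset.mem_image]
      exact ⟨t, Finset.mem_range.mpr h4, rfl⟩

lemma card_StF (i j : ℕ) :
    (StF n s i j).card = ∑ a ∈ Finset.range (i + 1), ∑ b ∈ Finset.Icc j n, s a b := by
  rw [StF, Finset.card_biUnion]
  · rw [Finset.sum_product]
    apply Finset.sum_congr rfl
    intro a _
    apply Finset.sum_congr rfl
    intro b _
    rw [Finset.card_image_of_injOn (by intro x _ y _ hxy; simpa [Prod.ext_iff] using hxy),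
      Finset.card_range]
  · intro ab _ ab' _ hne
    simp only [Function.onFun]
    rw [Finset.disjoint_left]
    intro x hx hx'
    apply hne
    rw [Finset.mem_image] at hx hx'
    obtain ⟨t1, _, h1⟩ := hx
    obtain ⟨t2, _, h2⟩ := hx'
    rw [← h1] at h2
    have : ab'.1 = ab.1 ∧ ab'.2 = ab.2 ∧ t2 = t1 := by simpa [Prod.ext_iff] using h2
    ext
    · omega
    · omega

lemma SF_WW_eq {i j : ℕ} (hij : i ≤ j) (hjn : j ≤ n) :
    SF e (WW n e s hse) i j = (StF n s i j).image fun x => posn n s i x.1 x.2.1 x.2.2 := by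
  ext q
  rw [mem_SF, Finset.mem_image]
  constructor
  · rintro ⟨hq, hsurv⟩
    obtain ⟨a, b, t, ha, hb, hbn, ht, hpos⟩ := exists_strand hse (by omega) hq
    refine ⟨(a, b, t), ?_, by simpa using hpos⟩
    rw [mem_StF]
    refine ⟨ha, ?_, hbn, ht⟩
    by_contra hcon
    push_neg at hcon
    have hd := chain_death hse ha hb (by omega) ht
    rw [hpos] at hd
    have := hsurv (b + 1) (by omega) (by omega)
    omega
  · rintro ⟨⟨a, b, t⟩, hmem, heq⟩
    rw [mem_StF] at hmem
    obtain ⟨ha, hjb, hbn, ht⟩ := hmem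
    simp only at heq
    subst heq
    constructor
    · exact posn_lt_e hse (by omega) ha (by omega) hbn ht
    · intro k hk1 hk2
      rw [chain_posn hse ha (by omega) (by omega) hbn ht]
      exact posn_lt_e hse (by omega) (by omega) (by omega) hbn ht

lemma rank_WW {i j : ℕ} (hij : i ≤ j) (hjn : j ≤ n) :
    rank e (WW n e s hse) i j = ∑ a ∈ Finset.range (i + 1), ∑ b ∈ Finset.Icc j n, s a b := by
  rw [rank_eq_card_SF, SF_WW_eq hse hij hjn, Finset.card_image_of_injOn, card_StF]
  rintro ⟨a, b, t⟩ h1 ⟨a', b', t'⟩ h2 heq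
  rw [Finset.mem_coe, mem_StF] at h1 h2
  simp only at heq
  obtain ⟨e1, e2, e3⟩ := posn_inj (n := n) (s := s) (show a ≤ i by omega) (by omega)
    (by omega) h1.2.2.2 (by omega) (by omega) (by omega) h2.2.2.2 heq
  simp [e1, e2, e3]

end RankOfWW

section InvChar

variable {n : ℕ} {e : ℕ → ℕ} {s : ℕ → ℕ → ℕ}
variable (hse : ∀ c, c ≤ n → e c = Gs n s c (c + 1)) {c : ℕ} (hc1 : 1 ≤ c) (hcn : c ≤ n)

include hse hc1 hcn

lemma inv_char {x y : ℕ} (hxy : x < y) :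
    wfun n e s c y < wfun n e s c x ↔
      (e c ≤ y ∧ y < e c + Ds s c c ∧
        ((x < Gs n s c c ∧ y - e c < Ds s c (AA n s c x)) ∨
         (Gs n s c c ≤ x ∧ x < e c))) := by
  have hE1 := hE hse hc1 hcn
  have hE2 := hE' hse hc1 hcn
  have hK := hKey hse hc1 hcn
  have hGe := hGle hse hc1 hcn
  by_cases hx1 : x < Gs n s c c
  · obtain ⟨hxa1, hxa2, hxa3⟩ := AA_spec n s (show x < Gs n s c (c + 1) by omega)
    have hxac : AA n s c x < c := by
      rcases Nat.eq_or_lt_of_le hxa3 with h | h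
      · rw [h] at hxa1
        omega
      · exact h
    have hdsx := Ds_succ s c (AA n s c x)
    have hg1 := Gsplit n s hc1 hcn (AA n s c x)
    have hg2 := Gsplit n s hc1 hcn (AA n s c x + 1)
    have hmonox : Gs n s (c - 1) (AA n s c x + 1) ≤ Gs n s (c - 1) c :=
      Gs_mono n s (c - 1) (by omega)
    have hvx : wfun n e s c x = x + Ds s c (AA n s c x) := by
      rw [wfun, if_pos hx1]
    by_cases hy1 : y < Gs n s c c
    · obtain ⟨hya1, hya2, hya3⟩ := AA_spec n s (show y < Gs n s c (c + 1) by omega)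
      have hvy : wfun n e s c y = y + Ds s c (AA n s c y) := by
        rw [wfun, if_pos hy1]
      have hcmp : AA n s c x ≤ AA n s c y := by
        by_contra hcon
        push_neg at hcon
        have := Gs_mono n s c (show AA n s c y + 1 ≤ AA n s c x by omega)
        omega
      have hdcmp : Ds s c (AA n s c x) ≤ Ds s c (AA n s c y) := Ds_mono s c hcmp
      rw [hvx, hvy]
      omega
    · by_cases hy2 : y < e c
      · have hvy : wfun n e s c y = e (c - 1) + (y - Gs n s c c) := by
          rw [wfun, if_neg (by omega), if_pos hy2]
        rw [hvx, hvy]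
        omega
      · by_cases hy3 : y < e c + Ds s c c
        · obtain ⟨hb1, hb2, hb3⟩ := AA'_spec s (show y - e c < Ds s c c by omega)
          have hds' := Ds_succ s c (AA' s c (y - e c))
          have hgs' := Gs_succ n s (c - 1) (AA' s c (y - e c))
          have hts' : Ts n s (AA' s c (y - e c)) (c - 1)
              = s (AA' s c (y - e c)) (c - 1) + Ts n s (AA' s c (y - e c)) c := by
            have h := Ts_split n s (AA' s c (y - e c)) (c - 1) (by omega)
            rwa [show c - 1 + 1 = c by omega] at h
          have hvy : wfun n e s c y =
              (Gs n s (c - 1) (AA' s c (y - e c) + 1) - s (AA' s c (y - e c)) (c - 1))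
                + ((y - e c) - Ds s c (AA' s c (y - e c))) := by
            rw [wfun, if_neg (by omega), if_neg (by omega), if_pos hy3]
          rcases Nat.lt_or_ge (AA' s c (y - e c)) (AA n s c x) with hcase | hcase
          · have hm1 : Gs n s (c - 1) (AA' s c (y - e c) + 1) ≤ Gs n s (c - 1) (AA n s c x) :=
              Gs_mono n s (c - 1) (by omega)
            have hm2 : Ds s c (AA' s c (y - e c) + 1) ≤ Ds s c (AA n s c x) :=
              Ds_mono s c (by omega)
            rw [hvx, hvy]
            omega
          · have hgsp' := Gsplit n s hc1 hcn (AA' s c (y - e c))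
            have hm2 : Ds s c (AA n s c x) ≤ Ds s c (AA' s c (y - e c)) := Ds_mono s c hcase
            have hkey2 : Gs n s c (AA n s c x + 1)
                ≤ Gs n s c (AA' s c (y - e c)) + Ts n s (AA' s c (y - e c)) c := by
              rcases Nat.eq_or_lt_of_le hcase with h | h
              · rw [← h, ← Gs_succ]
              · calc Gs n s c (AA n s c x + 1) ≤ Gs n s c (AA' s c (y - e c)) :=
                    Gs_mono n s c (by omega)
                  _ ≤ _ := by omega
            rw [hvx, hvy]
            omega
        · have hvy : wfun n e s c y = y := by
            rw [wfun, if_neg (by omega), if_neg (by omega), if_neg (by omega)]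
          rw [hvx, hvy]
          omega
  · by_cases hx2 : x < e c
    · have hvx : wfun n e s c x = e (c - 1) + (x - Gs n s c c) := by
        rw [wfun, if_neg (by omega), if_pos hx2]
      by_cases hy2 : y < e c
      · have hvy : wfun n e s c y = e (c - 1) + (y - Gs n s c c) := by
          rw [wfun, if_neg (by omega), if_pos hy2]
        rw [hvx, hvy]
        omega
      · by_cases hy3 : y < e c + Ds s c c
        · obtain ⟨hb1, hb2, hb3⟩ := AA'_spec s (show y - e c < Ds s c c by omega)
          have hds' := Ds_succ s c (AA' s c (y - e c))
          have hgs' := Gs_succ n s (c - 1) (AA' s c (y - e c))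
          have hts' : Ts n s (AA' s c (y - e c)) (c - 1)
              = s (AA' s c (y - e c)) (c - 1) + Ts n s (AA' s c (y - e c)) c := by
            have h := Ts_split n s (AA' s c (y - e c)) (c - 1) (by omega)
            rwa [show c - 1 + 1 = c by omega] at h
          have hmono : Gs n s (c - 1) (AA' s c (y - e c) + 1) ≤ Gs n s (c - 1) c :=
            Gs_mono n s (c - 1) (by omega)
          have hvy : wfun n e s c y =
              (Gs n s (c - 1) (AA' s c (y - e c) + 1) - s (AA' s c (y - e c)) (c - 1))
                + ((y - e c) - Ds s c (AA' s c (y - e c))) := by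
            rw [wfun, if_neg (by omega), if_neg (by omega), if_pos hy3]
          rw [hvx, hvy]
          omega
        · have hvy : wfun n e s c y = y := by
            rw [wfun, if_neg (by omega), if_neg (by omega), if_neg (by omega)]
          rw [hvx, hvy]
          omega
    · by_cases hx3 : x < e c + Ds s c c
      · obtain ⟨ha1, ha2, ha3⟩ := AA'_spec s (show x - e c < Ds s c c by omega)
        have hds := Ds_succ s c (AA' s c (x - e c))
        have hgs := Gs_succ n s (c - 1) (AA' s c (x - e c))
        have hts : Ts n s (AA' s c (x - e c)) (c - 1)
            = s (AA' s c (x - e c)) (c - 1) + Ts n s (AA' s c (x - e c)) c := by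
          have h := Ts_split n s (AA' s c (x - e c)) (c - 1) (by omega)
          rwa [show c - 1 + 1 = c by omega] at h
        have hmono : Gs n s (c - 1) (AA' s c (x - e c) + 1) ≤ Gs n s (c - 1) c :=
          Gs_mono n s (c - 1) (by omega)
        have hvx : wfun n e s c x =
            (Gs n s (c - 1) (AA' s c (x - e c) + 1) - s (AA' s c (x - e c)) (c - 1))
              + ((x - e c) - Ds s c (AA' s c (x - e c))) := by
          rw [wfun, if_neg (by omega), if_neg (by omega), if_pos hx3]
        by_cases hy3 : y < e c + Ds s c c
        · obtain ⟨hb1, hb2, hb3⟩ := AA'_spec s (show y - e c < Ds s c c by omega)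
          have hds2 := Ds_succ s c (AA' s c (y - e c))
          have hgs2 := Gs_succ n s (c - 1) (AA' s c (y - e c))
          have hts2 : Ts n s (AA' s c (y - e c)) (c - 1)
              = s (AA' s c (y - e c)) (c - 1) + Ts n s (AA' s c (y - e c)) c := by
            have h := Ts_split n s (AA' s c (y - e c)) (c - 1) (by omega)
            rwa [show c - 1 + 1 = c by omega] at h
          have hvy : wfun n e s c y =
              (Gs n s (c - 1) (AA' s c (y - e c) + 1) - s (AA' s c (y - e c)) (c - 1))
                + ((y - e c) - Ds s c (AA' s c (y - e c))) := by
            rw [wfun, if_neg (by omega), if_neg (by omega), if_pos hy3]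
          have hcmp : AA' s c (x - e c) ≤ AA' s c (y - e c) := by
            by_contra hcon
            push_neg at hcon
            have := Ds_mono s c (show AA' s c (y - e c) + 1 ≤ AA' s c (x - e c) by omega)
            omega
          rcases Nat.eq_or_lt_of_le hcmp with heq | hlt
          · have hv1 : Gs n s (c - 1) (AA' s c (x - e c) + 1)
                = Gs n s (c - 1) (AA' s c (y - e c) + 1) := by rw [heq]
            have hv2 : Ds s c (AA' s c (x - e c)) = Ds s c (AA' s c (y - e c)) := by rw [heq]
            have hv3 : s (AA' s c (x - e c)) (c - 1) = s (AA' s c (y - e c)) (c - 1) := by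
              rw [heq]
            rw [hvx, hvy]
            omega
          · have hmm : Gs n s (c - 1) (AA' s c (x - e c) + 1)
                ≤ Gs n s (c - 1) (AA' s c (y - e c)) := Gs_mono n s (c - 1) (by omega)
            have hgsp2 := Gsplit n s hc1 hcn (AA' s c (y - e c))
            rw [hvx, hvy]
            omega
        · have hvy : wfun n e s c y = y := by
            rw [wfun, if_neg (by omega), if_neg (by omega), if_neg (by omega)]
          rw [hvx, hvy]
          omega
      · have hvx : wfun n e s c x = x := by
          rw [wfun, if_neg (by omega), if_neg (by omega), if_neg (by omega)]
        have hvy : wfun n e s c y = y := by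
          rw [wfun, if_neg (by omega), if_neg (by omega), if_neg (by omega)]
        rw [hvx, hvy]
        omega

end InvChar

section EllWW

variable {n : ℕ} {e : ℕ → ℕ} {s : ℕ → ℕ → ℕ}
variable (hse : ∀ c, c ≤ n → e c = Gs n s c (c + 1)) {c : ℕ} (hc1 : 1 ≤ c) (hcn : c ≤ n)

include hse hc1 hcn

lemma ell_WW :
    ell (WW n e s hse c)
      = (∑ a ∈ Finset.range c, Ts n s a c * Ds s c a) + (e c - Gs n s c c) * Ds s c c := by
  have hE1 := hE hse hc1 hcn
  have hK := hKey hse hc1 hcn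
  have hGe := hGle hse hc1 hcn
  have hid : ∀ x, e c + Ds s c c ≤ x → WW n e s hse c x = x := fun x hx => by
    rw [WW_apply hse hc1 hcn]
    exact wfun_id_tail hse hc1 hcn x hx
  rw [ell_eq_card_invF hid]
  have hchar : invF (WW n e s hse c) (e c + Ds s c c)
      = ((Finset.range c).biUnion fun a =>
          (Finset.Ico (Gs n s c a) (Gs n s c (a + 1))) ×ˢ (Finset.Ico (e c) (e c + Ds s c a)))
        ∪ ((Finset.Ico (Gs n s c c) (e c)) ×ˢ (Finset.Ico (e c) (e c + Ds s c c))) := by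
    ext ⟨x, y⟩
    simp only [invF, Finset.mem_filter, Finset.mem_product, Finset.mem_range,
      Finset.mem_union, Finset.mem_biUnion, Finset.mem_Ico]
    constructor
    · rintro ⟨⟨hxN, hyN⟩, hxy, hinv⟩
      rw [WW_apply hse hc1 hcn, WW_apply hse hc1 hcn, inv_char hse hc1 hcn hxy] at hinv
      obtain ⟨hy1, hy2, hcase⟩ := hinv
      rcases hcase with ⟨h1, h2⟩ | ⟨h1, h2⟩
      · obtain ⟨ha1, ha2, ha3⟩ := AA_spec n s (show x < Gs n s c (c + 1) by omega)
        have hac : AA n s c x < c := by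
          rcases Nat.eq_or_lt_of_le ha3 with h | h
          · rw [h] at ha1
            omega
          · exact h
        exact Or.inl ⟨AA n s c x, hac, ⟨ha1, ha2⟩, by omega⟩
      · exact Or.inr ⟨⟨h1, h2⟩, by omega⟩
    · rintro (⟨a, ha, ⟨h1, h2⟩, h3, h4⟩ | hmem)
      · 
        have hAA : AA n s c x = a := AA_eq n s (by omega) h1 h2
        have hmono : Gs n s c (a + 1) ≤ Gs n s c c := Gs_mono n s c (by omega)
        have hdmono : Ds s c a ≤ Ds s c c := Ds_mono s c (by omega)
        have hxy : x < y := by omega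
        refine ⟨⟨by omega, by omega⟩, hxy, ?_⟩
        rw [WW_apply hse hc1 hcn, WW_apply hse hc1 hcn, inv_char hse hc1 hcn hxy]
        refine ⟨by omega, by omega, Or.inl ⟨by omega, ?_⟩⟩
        rw [hAA]
        omega
      · obtain ⟨⟨h1, h2⟩, h3, h4⟩ := hmem
        have hxy : x < y := by omega
        refine ⟨⟨by omega, by omega⟩, hxy, ?_⟩
        rw [WW_apply hse hc1 hcn, WW_apply hse hc1 hcn, inv_char hse hc1 hcn hxy]
        exact ⟨by omega, by omega, Or.inr ⟨h1, h2⟩⟩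
  rw [hchar]
  rw [Finset.card_union_of_disjoint, Finset.card_biUnion]
  · congr 1
    · apply Finset.sum_congr rfl
      intro a ha
      rw [Finset.mem_range] at ha
      rw [Finset.card_product, Nat.card_Ico, Nat.card_Ico]
      have := Gs_succ n s c a
      have h1 : Gs n s c (a + 1) - Gs n s c a = Ts n s a c := by omega
      have h2 : e c + Ds s c a - e c = Ds s c a := by omega
      rw [h1, h2]
    · rw [Finset.card_product, Nat.card_Ico, Nat.card_Ico,
        show e c + Ds s c c - e c = Ds s c c by omega]
  · intro a ha a' ha' hne
    simp only [Function.onFun]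
    rw [Finset.disjoint_left]
    intro ⟨x, y⟩ hx hx'
    rw [Finset.mem_product, Finset.mem_Ico, Finset.mem_Ico] at hx hx'
    rcases Nat.lt_or_ge a a' with h | h
    · have := Gs_mono n s c (show a + 1 ≤ a' by omega)
      omega
    · have ha'a : a' < a := by omega
      have := Gs_mono n s c (show a' + 1 ≤ a by omega)
      omega
  · rw [Finset.disjoint_left]
    intro ⟨x, y⟩ hx hx'
    rw [Finset.mem_biUnion] at hx
    obtain ⟨a, ha, hmem⟩ := hx
    rw [Finset.mem_range] at ha
    rw [Finset.mem_product, Finset.mem_Ico, Finset.mem_Ico] at hmem hx'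
    have := Gs_mono n s c (show a + 1 ≤ c by omega)
    omega

end EllWW

section Part2

open scoped Classical

variable {n : ℕ} {e : ℕ → ℕ} {r : ℕ → ℕ → ℕ} {u : ℕ → Equiv.Perm ℕ}
variable (hru : RankEq n e u r)

include hru

lemma fact_A {c : ℕ} (hc : c ≤ n) : r c c = e c := by
  rw [← hru c c le_rfl hc, rank_eq_card_SF, SF_self, Finset.card_range]

lemma fact_B {i j j' : ℕ} (hij : i ≤ j) (hjj' : j ≤ j') (hj'n : j' ≤ n) : r i j' ≤ r i j := by
  rw [← hru i j hij (by omega), ← hru i j' (by omega) hj'n, rank_eq_card_SF, rank_eq_card_SF]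
  exact Finset.card_le_card (SF_anti e u hjj')

lemma fact_C {a j : ℕ} (ha : 1 ≤ a) (haj : a ≤ j) (hjn : j ≤ n) : r (a - 1) j ≤ r a j := by
  rw [← hru (a - 1) j (by omega) hjn, ← hru a j haj hjn, rank_eq_card_SF, rank_eq_card_SF]
  have hstep := card_SF_step e u (show a - 1 < j by omega)
  rw [show a - 1 + 1 = a by omega] at hstep
  rw [hstep]
  exact Finset.card_le_card (Finset.filter_subset _ _)

lemma fact_D {a b : ℕ} (ha : 1 ≤ a) (hab : a ≤ b) (hbn : b < n) :
    r (a - 1) b + r a (b + 1) ≤ r a b + r (a - 1) (b + 1) := by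
  have h1 : r (a - 1) b = ((SF e u a b).filter fun q => u a q < e (a - 1)).card := by
    rw [← hru (a - 1) b (by omega) (by omega), rank_eq_card_SF]
    have hstep := card_SF_step e u (show a - 1 < b by omega)
    rwa [show a - 1 + 1 = a by omega] at hstep
  have h2 : r (a - 1) (b + 1) = ((SF e u a (b + 1)).filter fun q => u a q < e (a - 1)).card := by
    rw [← hru (a - 1) (b + 1) (by omega) (by omega), rank_eq_card_SF]
    have hstep := card_SF_step e u (show a - 1 < b + 1 by omega)
    rwa [show a - 1 + 1 = a by omega] at hstep
  have h3 : r a b = (SF e u a b).card := by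
    rw [← hru a b hab (by omega), rank_eq_card_SF]
  have h4 : r a (b + 1) = (SF e u a (b + 1)).card := by
    rw [← hru a (b + 1) (by omega) (by omega), rank_eq_card_SF]
  have hsub : SF e u a (b + 1) ⊆ SF e u a b := SF_anti e u (by omega)
  have hsub2 : (SF e u a b).filter (fun q => u a q < e (a - 1))
      ⊆ ((SF e u a (b + 1)).filter fun q => u a q < e (a - 1))
        ∪ (SF e u a b \ SF e u a (b + 1)) := by
    intro q hq
    rw [Finset.mem_filter] at hq
    by_cases hmem : q ∈ SF e u a (b + 1)
    · exact Finset.mem_union_left _ (Finset.mem_filter.mpr ⟨hmem, hq.2⟩)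
    · exact Finset.mem_union_right _ (Finset.mem_sdiff.mpr ⟨hq.1, hmem⟩)
  have hcard := Finset.card_le_card hsub2
  have hcard2 := Finset.card_union_le
    ((SF e u a (b + 1)).filter fun q => u a q < e (a - 1))
    (SF e u a b \ SF e u a (b + 1))
  have hcard3 := Finset.card_sdiff_of_subset hsub
  have hYX := Finset.card_le_card hsub
  omega

omit hru

/-- strand multiplicities determined by the rank conditions. -/
def sdef (n : ℕ) (r : ℕ → ℕ → ℕ) : ℕ → ℕ → ℕ := fun a b =>
  if a ≤ b ∧ b ≤ n then
    (if a = 0 then (if b = n then r 0 n else r 0 b - r 0 (b + 1))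
     else (if b = n then r a n - r (a - 1) n
           else (r a b + r (a - 1) (b + 1)) - (r (a - 1) b + r a (b + 1))))
  else 0

include hru

lemma sdef_T1aux : ∀ d a j, n - j = d → a ≤ j → j ≤ n →
    (∑ b ∈ Finset.Icc j n, sdef n r a b) + (if a = 0 then 0 else r (a - 1) j) = r a j := by
  intro d
  induction d with
  | zero =>
    intro a j hd haj hjn
    have hjn' : j = n := by omega
    subst hjn'
    rw [Finset.Icc_self, Finset.sum_singleton]
    by_cases ha : a = 0
    · subst ha
      rw [if_pos rfl, sdef, if_pos ⟨haj, le_rfl⟩, if_pos rfl, if_pos rfl]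
      omega
    · rw [if_neg ha, sdef, if_pos ⟨haj, le_rfl⟩, if_neg ha, if_pos rfl]
      have := fact_C hru (by omega) haj le_rfl
      omega
  | succ d ih =>
    intro a j hd haj hjn
    have hjn' : j < n := by omega
    have hins : Finset.Icc j n = insert j (Finset.Icc (j + 1) n) := by
      ext x
      simp only [Finset.mem_Icc, Finset.mem_insert]
      omega
    rw [hins, Finset.sum_insert (by simp)]
    by_cases ha : a = 0
    · subst ha
      have hih := ih 0 (j + 1) (by omega) (by omega) (by omega)
      rw [if_pos rfl] at hih ⊢
      rw [sdef, if_pos ⟨haj, by omega⟩, if_pos rfl, if_neg (by omega)]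
      have hmono := fact_B hru (show 0 ≤ j by omega) (show j ≤ j + 1 by omega) (by omega)
      omega
    · have hih := ih a (j + 1) (by omega) (by omega) (by omega)
      rw [if_neg ha] at hih ⊢
      rw [sdef, if_pos ⟨haj, by omega⟩, if_neg ha, if_neg (by omega)]
      have hD := fact_D hru (by omega) haj hjn'
      have hC1 := fact_C hru (by omega) haj (by omega)
      have hC2 := fact_C hru (by omega) (show a ≤ j + 1 by omega) (by omega)
      have hB := fact_B hru (show a ≤ j by omega) (show j ≤ j + 1 by omega) (by omega)
      omega

lemma sdef_T1 {a j : ℕ} (haj : a ≤ j) (hjn : j ≤ n) :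
    (∑ b ∈ Finset.Icc j n, sdef n r a b) + (if a = 0 then 0 else r (a - 1) j) = r a j :=
  sdef_T1aux hru (n - j) a j rfl haj hjn

lemma sdef_T2 {i j : ℕ} (hij : i ≤ j) (hjn : j ≤ n) :
    ∑ a ∈ Finset.range (i + 1), ∑ b ∈ Finset.Icc j n, sdef n r a b = r i j := by
  induction i with
  | zero =>
    rw [Finset.sum_range_one]
    have h := sdef_T1 hru (show 0 ≤ j by omega) hjn
    rw [if_pos rfl] at h
    omega
  | succ i ihi =>
    rw [Finset.sum_range_succ, ihi (by omega)]
    have h := sdef_T1 hru (show i + 1 ≤ j by omega) hjn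
    rw [if_neg (by omega), show i + 1 - 1 = i from rfl] at h
    omega

lemma sdef_hse : ∀ c, c ≤ n → e c = Gs n (sdef n r) c (c + 1) := by
  intro c hc
  have h : Gs n (sdef n r) c (c + 1)
      = ∑ a ∈ Finset.range (c + 1), ∑ b ∈ Finset.Icc c n, sdef n r a b := rfl
  rw [h, sdef_T2 hru le_rfl hc, fact_A hru hc]

end Part2

section Final

variable {n : ℕ} {e : ℕ → ℕ} {r : ℕ → ℕ → ℕ} {u : ℕ → Equiv.Perm ℕ}
variable (hru : RankEq n e u r)

include hru

lemma WW_length :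
    diagLength n (WW n e (sdef n r) (sdef_hse hru)) = codim n r := by
  rw [diagLength]
  have hell : ∀ c ∈ Finset.Icc 1 n, ell (WW n e (sdef n r) (sdef_hse hru) c)
      = ∑ a ∈ Finset.range (c + 1), Ts n (sdef n r) a c * Ds (sdef n r) c a := by
    intro c hc
    rw [Finset.mem_Icc] at hc
    rw [ell_WW (sdef_hse hru) hc.1 hc.2, Finset.sum_range_succ]
    have h1 := sdef_hse hru c hc.2
    have h2 := Gs_succ n (sdef n r) c c
    rw [show e c - Gs n (sdef n r) c c = Ts n (sdef n r) c c by omega]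
  rw [Finset.sum_congr rfl hell]
  have hcod : codim n r = ∑ j ∈ Finset.Icc 1 n, ∑ i ∈ Finset.range j,
      (r i (j - 1) - r i j) * (r (i + 1) j - r i j) := by
    rw [codim, Finset.sum_comm]
    have step1 : ∀ j ∈ Finset.range (n + 1), (∑ i ∈ Finset.range (n + 1),
        if i < j then (r i (j - 1) - r i j) * (r (i + 1) j - r i j) else 0)
        = ∑ i ∈ Finset.range j, (r i (j - 1) - r i j) * (r (i + 1) j - r i j) := by
      intro j hj
      rw [Finset.mem_range] at hj
      rw [← Finset.sum_filter]
      apply Finset.sum_congr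
      · ext x
        simp only [Finset.mem_filter, Finset.mem_range]
        omega
      · intro _ _
        rfl
    rw [Finset.sum_congr rfl step1]
    rw [show Finset.range (n + 1) = insert 0 (Finset.Icc 1 n) by
      ext x; simp [Finset.mem_Icc]; omega]
    rw [Finset.sum_insert (by simp)]
    simp
  rw [hcod]
  apply Finset.sum_congr rfl
  intro j hj
  rw [Finset.mem_Icc] at hj
  have hterm : ∀ i ∈ Finset.range j,
      (r i (j - 1) - r i j) * (r (i + 1) j - r i j)
        = Ds (sdef n r) j (i + 1) * Ts n (sdef n r) (i + 1) j := by
    intro i hi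
    rw [Finset.mem_range] at hi
    have hins : Finset.Icc (j - 1) n = insert (j - 1) (Finset.Icc j n) := by
      ext x
      simp only [Finset.mem_Icc, Finset.mem_insert]
      omega
    have d1 : r i (j - 1) = r i j + Ds (sdef n r) j (i + 1) := by
      rw [← sdef_T2 hru (show i ≤ j - 1 by omega) (show j - 1 ≤ n by omega),
        ← sdef_T2 hru (show i ≤ j by omega) hj.2]
      have hsp : ∀ a ∈ Finset.range (i + 1), ∑ b ∈ Finset.Icc (j - 1) n, sdef n r a b
          = sdef n r a (j - 1) + ∑ b ∈ Finset.Icc j n, sdef n r a b := by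
        intro a _
        rw [hins, Finset.sum_insert (by simp only [Finset.mem_Icc]; omega)]
      rw [Finset.sum_congr rfl hsp, Finset.sum_add_distrib]
      have hD : Ds (sdef n r) j (i + 1) = ∑ a ∈ Finset.range (i + 1), sdef n r a (j - 1) :=
        rfl
      omega
    have d2 : r (i + 1) j = r i j + Ts n (sdef n r) (i + 1) j := by
      rw [← sdef_T2 hru (show i + 1 ≤ j by omega) hj.2,
        ← sdef_T2 hru (show i ≤ j by omega) hj.2, Finset.sum_range_succ]
      rfl
    rw [d1, d2, Nat.add_sub_cancel_left, Nat.add_sub_cancel_left]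
  rw [Finset.sum_congr rfl hterm, Finset.sum_range_succ']
  have hD0 : Ds (sdef n r) j 0 = 0 := by simp [Ds]
  rw [hD0]
  simp only [mul_zero, zero_mul, add_zero]
  apply Finset.sum_congr rfl
  intro i _
  ring

end Final

/-- every lace diagram with rank conditions `r` has length at least
`d r`, and `d r` is attained, i.e. the smallest possible length of a lace diagram
with rank conditions `r` is `d r`. -/
theorem length_ge_codim (n : ℕ) (hn : 1 ≤ n) (e : ℕ → ℕ) (r : ℕ → ℕ → ℕ)
    (hr : ∃ u, IsLace n e u ∧ RankEq n e u r) :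
    (∀ w, IsLace n e w → RankEq n e w r → codim n r ≤ diagLength n w) ∧
      ∃ w, IsLace n e w ∧ RankEq n e w r ∧ diagLength n w = codim n r := by
  obtain ⟨u, hu, hru⟩ := hr
  refine ⟨fun w hw hrk => lower_bound hw hrk,
    ⟨WW n e (sdef n r) (sdef_hse hru), WW_lace _, ?_, WW_length hru⟩⟩
  intro i j hij hjn
  rw [rank_WW (sdef_hse hru) hij hjn]
  exact sdef_T2 hru hij hjn
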